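/- arXiv:1406.7210 — 5 statements merged into one kernel-verified Lean document; each statement's English description precedes it below -/
import Mathlib

section
/- Consider the discrete-time delayed system Σ: x(k+1) = f(x(k)) + g(x(k−d(k))) for k ∈ ℕ_0, with x(k) = φ(k) for k ∈ {−d_max,…,0}, where f(0) = g(0) = 0, f and g are non-decreasing on ℝ^n_+, and both f and g are homogeneous of degree p = 0 with respect to the dilation map δ_λ^r. Then the following statements are equivalent: (i) there exists a vector v > 0 such that f(v) + g(v) < v (componentwise); (ii) Σ is globally asymptotically stable for every nonnegative initial condition and for every delay d satisfying Assumption C (including unbounded time-varying delays); (iii) the undelayed system x(k+1) = f(x(k)) + g(x(k)) is globally asymptotically stable for every nonnegative initial condition. -/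
open Real Filter Set Asymptotics

/-- A vector field `g` is non-decreasing on the nonnegative orthant. -/
def NonDecOn (n : ℕ) (g : (Fin n → ℝ) → Fin n → ℝ) : Prop :=
  ∀ x y : Fin n → ℝ, (∀ i, 0 ≤ y i) → (∀ i, y i ≤ x i) → ∀ i, g y i ≤ g x i

/-- `f` is homogeneous of degree `p` with respect to the dilation map `δ_λ^r`. -/
def Homogeneous (n : ℕ) (r : Fin n → ℝ) (p : ℝ) (f : (Fin n → ℝ) → Fin n → ℝ) : Prop :=
  ∀ (x : Fin n → ℝ) (l : ℝ), 0 < l →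
    f (fun i => l ^ r i * x i) = fun i => l ^ p * (l ^ r i * f x i)

/-- Assumption C on the delay: `d : ℕ₀ → ℕ₀` satisfies `k - d(k) → ∞`, and
`dmax ∈ ℕ₀` bounds the initial-history window: `k - d(k) ≥ -dmax` for all `k`. -/
def DelayC (d : ℕ → ℕ) (dmax : ℕ) : Prop :=
  Tendsto (fun k : ℕ => (k : ℤ) - (d k : ℤ)) atTop atTop ∧
    ∀ k : ℕ, -(dmax : ℤ) ≤ (k : ℤ) - (d k : ℤ)

/-- A solution of the discrete delayed system `x(k+1) = f(x(k)) + g(x(k - d(k)))`, `k ∈ ℕ₀`,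
with initial condition `φ` on `{-dmax, …, 0}`. -/
def IsSolutionD (n : ℕ) (f g : (Fin n → ℝ) → Fin n → ℝ) (d : ℕ → ℕ) (dmax : ℕ)
    (φ x : ℤ → Fin n → ℝ) : Prop :=
  (∀ k : ℤ, -(dmax : ℤ) ≤ k → k ≤ 0 → x k = φ k) ∧
    ∀ k : ℕ, x ((k : ℤ) + 1) = f (x (k : ℤ)) + g (x ((k : ℤ) - (d k : ℤ)))

/-- A nonnegative initial condition on `{-dmax, …, 0}`. -/
def NonnegInitD (n : ℕ) (dmax : ℕ) (φ : ℤ → Fin n → ℝ) : Prop :=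
  ∀ k : ℤ, -(dmax : ℤ) ≤ k → k ≤ 0 → ∀ i, 0 ≤ φ k i

/-- Global asymptotic stability of the discrete delayed system: Lyapunov stability of the
origin plus global attractivity over nonnegative initial conditions. -/
def GASD (n : ℕ) (f g : (Fin n → ℝ) → Fin n → ℝ) (d : ℕ → ℕ) (dmax : ℕ) : Prop :=
  (∀ ε > (0 : ℝ), ∃ δ > (0 : ℝ), ∀ φ x : ℤ → Fin n → ℝ,
      NonnegInitD n dmax φ → IsSolutionD n f g d dmax φ x →
      (∀ k : ℤ, -(dmax : ℤ) ≤ k → k ≤ 0 → ‖φ k‖ < δ) →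
      ∀ k : ℕ, ‖x (k : ℤ)‖ < ε) ∧
  ∀ φ x : ℤ → Fin n → ℝ, NonnegInitD n dmax φ → IsSolutionD n f g d dmax φ x →
      Tendsto (fun k : ℕ => x (k : ℤ)) atTop (nhds 0)

namespace DHND

variable {n : ℕ} {f g : (Fin n → ℝ) → Fin n → ℝ} {r : Fin n → ℝ}

lemma apply_nonneg' (hmono : NonDecOn n f) (hf0 : f 0 = 0) {x : Fin n → ℝ}
    (hx : ∀ i, 0 ≤ x i) (i : Fin n) : 0 ≤ f x i := by
  have := hmono x 0 (fun i => le_refl 0) (fun i => hx i) i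
  rwa [hf0] at this

lemma hom_apply (hfhom : Homogeneous n r 0 f) (a : Fin n → ℝ) {l : ℝ} (hl : 0 < l) (i : Fin n) :
    f (fun j => l ^ r j * a j) i = l ^ r i * f a i := by
  rw [hfhom a l hl]
  simp [Real.rpow_zero]

/-- choose parameter near a point with finitely many strict constraints -/
lemma exists_param_lt (c : Fin n → ℝ → ℝ) (b : Fin n → ℝ) (a : ℝ) (s : Set ℝ)
    [Filter.NeBot (nhdsWithin a s)] (hc : ∀ i, ContinuousAt (c i) a)
    (hb : ∀ i, c i a < b i) : ∃ l ∈ s, ∀ i, c i l < b i := by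
  have h1 : ∀ᶠ l in nhds a, ∀ i, c i l < b i :=
    eventually_all.2 fun i => (hc i).eventually_lt_const (hb i)
  exact (eventually_mem_nhdsWithin.and (h1.filter_mono nhdsWithin_le_nhds)).exists

lemma exists_small_scale (hr : ∀ i, 0 < r i) (v : Fin n → ℝ) (b : Fin n → ℝ)
    (hb : ∀ i, 0 < b i) : ∃ l : ℝ, 0 < l ∧ ∀ i, l ^ r i * v i < b i := by
  have hc : ∀ i, ContinuousAt (fun l : ℝ => l ^ r i * v i) 0 := by
    intro i
    exact (Real.continuousAt_rpow_const 0 (r i) (Or.inr (hr i).le)).mul continuousAt_const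
  have hval : ∀ i, (fun l : ℝ => l ^ r i * v i) 0 < b i := by
    intro i
    simpa [Real.zero_rpow (ne_of_gt (hr i))] using hb i
  obtain ⟨l, hl, h⟩ := exists_param_lt (fun i l => l ^ r i * v i) b 0 (Ioi 0) hc hval
  exact ⟨l, hl, h⟩

lemma exists_large_scale (hr : ∀ i, 0 < r i) {v : Fin n → ℝ} (hv : ∀ i, 0 < v i) (B : ℝ) :
    ∃ l : ℝ, 0 < l ∧ ∀ i, B < l ^ r i * v i := by
  have h1 : ∀ᶠ l : ℝ in atTop, ∀ i, B < l ^ r i * v i := by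
    refine eventually_all.2 fun i => ?_
    exact ((tendsto_rpow_atTop (hr i)).atTop_mul_const (hv i)).eventually_gt_atTop B
  exact ((eventually_gt_atTop 0).and h1).exists.imp fun l h => ⟨h.1, h.2⟩

lemma exists_q (hfmono : NonDecOn n f) (hgmono : NonDecOn n g) (hf0 : f 0 = 0) (hg0 : g 0 = 0)
    {v : Fin n → ℝ} (hv : ∀ i, 0 < v i) (hlt : ∀ i, f v i + g v i < v i) :
    ∃ q : ℝ, 0 < q ∧ q < 1 ∧ ∀ i, f v i + g v i ≤ q * v i := by
  rcases isEmpty_or_nonempty (Fin n) with he | he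
  · exact ⟨1/2, by norm_num, by norm_num, fun i => isEmptyElim i⟩
  · have hne : (Finset.univ : Finset (Fin n)).Nonempty := Finset.univ_nonempty
    set q0 := Finset.univ.sup' hne (fun i => (f v i + g v i) / v i) with hq0def
    have hq01 : q0 < 1 := by
      rw [Finset.sup'_lt_iff]
      intro i _
      exact (div_lt_one (hv i)).2 (hlt i)
    refine ⟨max q0 (1/2), lt_max_of_lt_right (by norm_num), max_lt hq01 (by norm_num), ?_⟩
    intro i
    have h1 : f v i + g v i = ((f v i + g v i) / v i) * v i :=
      (div_mul_cancel₀ _ (ne_of_gt (hv i))).symm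
    rw [h1]
    refine mul_le_mul_of_nonneg_right ?_ (hv i).le
    calc (f v i + g v i) / v i ≤ q0 := Finset.le_sup' (fun i => (f v i + g v i) / v i) (Finset.mem_univ i)
      _ ≤ max q0 (1/2) := le_max_left _ _

lemma exists_theta (hr : ∀ i, 0 < r i) {q : ℝ} (hq0 : 0 < q) (hq1 : q < 1) :
    ∃ θ : ℝ, 0 < θ ∧ θ < 1 ∧ ∀ i, q ≤ θ ^ r i := by
  rcases isEmpty_or_nonempty (Fin n) with he | he
  · exact ⟨1/2, by norm_num, by norm_num, fun i => isEmptyElim i⟩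
  · have hne : (Finset.univ : Finset (Fin n)).Nonempty := Finset.univ_nonempty
    set R := Finset.univ.sup' hne r with hRdef
    have hR : 0 < R := lt_of_lt_of_le (hr (Classical.arbitrary _))
      (Finset.le_sup' _ (Finset.mem_univ _))
    refine ⟨q ^ (1/R), Real.rpow_pos_of_pos hq0 _,
      Real.rpow_lt_one hq0.le hq1 (by positivity), ?_⟩
    intro i
    rw [← Real.rpow_mul hq0.le]
    have he1 : (1/R) * r i ≤ 1 := by
      rw [one_div, inv_mul_le_iff₀ hR, mul_one]
      exact Finset.le_sup' r (Finset.mem_univ i)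
    calc q = q ^ (1:ℝ) := (Real.rpow_one q).symm
      _ ≤ q ^ ((1/R) * r i) := Real.rpow_le_rpow_of_exponent_ge hq0 hq1.le he1


lemma inv_lemma (hf0 : f 0 = 0) (hg0 : g 0 = 0)
    (hfmono : NonDecOn n f) (hgmono : NonDecOn n g)
    {d : ℕ → ℕ} {dmax : ℕ} (hd2 : ∀ k : ℕ, -(dmax : ℤ) ≤ (k : ℤ) - (d k : ℤ))
    {φ x : ℤ → Fin n → ℝ} (hφ : NonnegInitD n dmax φ) (hsol : IsSolutionD n f g d dmax φ x)
    {w : Fin n → ℝ} (hww : ∀ i, f w i + g w i ≤ w i)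
    (hwin : ∀ k : ℤ, -(dmax : ℤ) ≤ k → k ≤ 0 → ∀ i, φ k i ≤ w i) :
    ∀ j : ℤ, -(dmax : ℤ) ≤ j → ∀ i, 0 ≤ x j i ∧ x j i ≤ w i := by
  have key : ∀ K : ℕ, ∀ j : ℤ, -(dmax : ℤ) ≤ j → j ≤ (K : ℤ) →
      ∀ i, 0 ≤ x j i ∧ x j i ≤ w i := by
    intro K
    induction K with
    | zero =>
      intro j h1 h2 i
      rw [hsol.1 j h1 (by exact_mod_cast h2)]
      exact ⟨hφ j h1 (by exact_mod_cast h2) i, hwin j h1 (by exact_mod_cast h2) i⟩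
    | succ K ih =>
      intro j h1 h2 i
      rcases lt_or_eq_of_le h2 with hlt | heq
      · exact ih j h1 (by push_cast at hlt ⊢; omega) i
      · have hK0 : -(dmax : ℤ) ≤ (K : ℤ) := by omega
        have hxK := ih (K : ℤ) hK0 le_rfl
        have hxD := ih ((K : ℤ) - (d K : ℤ)) (hd2 K) (by omega)
        have hrec := hsol.2 K
        have hj : j = (K : ℤ) + 1 := by push_cast at heq; omega
        rw [hj, hrec]
        have h1f : f (x (K : ℤ)) i ≤ f w i :=
          hfmono w (x (K : ℤ)) (fun i => (hxK i).1) (fun i => (hxK i).2) i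
        have h1g : g (x ((K : ℤ) - (d K : ℤ))) i ≤ g w i :=
          hgmono w _ (fun i => (hxD i).1) (fun i => (hxD i).2) i
        have h0f : 0 ≤ f (x (K : ℤ)) i := apply_nonneg' hfmono hf0 (fun i => (hxK i).1) i
        have h0g : 0 ≤ g (x ((K : ℤ) - (d K : ℤ))) i :=
          apply_nonneg' hgmono hg0 (fun i => (hxD i).1) i
        simp only [Pi.add_apply]
        exact ⟨add_nonneg h0f h0g, le_trans (add_le_add h1f h1g) (hww i)⟩
  intro j h1 i
  rcases le_or_gt j 0 with hj | hj
  · exact key 0 j h1 (by exact_mod_cast hj) i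
  · exact key j.toNat j h1 (by rw [Int.toNat_of_nonneg hj.le]) i


lemma gas_of_vec (hr : ∀ i, 0 < r i) (hf0 : f 0 = 0) (hg0 : g 0 = 0)
    (hfmono : NonDecOn n f) (hgmono : NonDecOn n g)
    (hfhom : Homogeneous n r 0 f) (hghom : Homogeneous n r 0 g)
    {v : Fin n → ℝ} (hvpos : ∀ i, 0 < v i) (hvlt : ∀ i, f v i + g v i < v i)
    (d : ℕ → ℕ) (dmax : ℕ) (hd : DelayC d dmax) : GASD n f g d dmax := by
  obtain ⟨q, hq0, hq1, hq⟩ := exists_q hfmono hgmono hf0 hg0 hvpos hvlt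
  obtain ⟨θ, hθ0, hθ1, hθ⟩ := exists_theta hr hq0 hq1
  have hcontr : ∀ l : ℝ, 0 < l → ∀ i,
      f (fun j => l ^ r j * v j) i + g (fun j => l ^ r j * v j) i
        ≤ θ ^ r i * (l ^ r i * v i) := by
    intro l hl i
    rw [hom_apply hfhom v hl i, hom_apply hghom v hl i, ← mul_add]
    have hlp : (0:ℝ) ≤ l ^ r i := (Real.rpow_pos_of_pos hl _).le
    calc l ^ r i * (f v i + g v i) ≤ l ^ r i * (q * v i) :=
          mul_le_mul_of_nonneg_left (hq i) hlp
      _ ≤ l ^ r i * (θ ^ r i * v i) :=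
          mul_le_mul_of_nonneg_left (mul_le_mul_of_nonneg_right (hθ i) (hvpos i).le) hlp
      _ = θ ^ r i * (l ^ r i * v i) := by ring
  have hθle1 : ∀ i, θ ^ r i ≤ 1 := fun i => (Real.rpow_le_one hθ0.le hθ1.le (hr i).le)
  have hsub : ∀ l : ℝ, 0 < l → ∀ i,
      f (fun j => l ^ r j * v j) i + g (fun j => l ^ r j * v j) i ≤ l ^ r i * v i := by
    intro l hl i
    refine le_trans (hcontr l hl i) ?_
    exact mul_le_of_le_one_left (mul_nonneg (Real.rpow_pos_of_pos hl _).le (hvpos i).le) (hθle1 i)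
  constructor
  · -- Lyapunov stability
    intro ε hε
    obtain ⟨l, hl0, hlε⟩ := exists_small_scale hr v (fun _ => ε) (fun _ => hε)
    set w : Fin n → ℝ := fun i => l ^ r i * v i with hwdef
    have hwpos : ∀ i, 0 < w i := fun i => mul_pos (Real.rpow_pos_of_pos hl0 _) (hvpos i)
    obtain ⟨δ, hδ0, hδw⟩ : ∃ δ > (0:ℝ), ∀ i, δ ≤ w i := by
      rcases isEmpty_or_nonempty (Fin n) with he | he
      · exact ⟨1, one_pos, fun i => isEmptyElim i⟩
      · refine ⟨Finset.univ.inf' Finset.univ_nonempty w, ?_, ?_⟩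
        · exact (Finset.lt_inf'_iff _).2 fun i _ => hwpos i
        · exact fun i => Finset.inf'_le _ (Finset.mem_univ i)
    refine ⟨δ, hδ0, ?_⟩
    intro φ x hφ hsol hsmall k
    have hwin : ∀ k : ℤ, -(dmax : ℤ) ≤ k → k ≤ 0 → ∀ i, φ k i ≤ w i := by
      intro k h1 h2 i
      have h3 : |φ k i| ≤ ‖φ k‖ := by
        rw [← Real.norm_eq_abs]; exact norm_le_pi_norm (φ k) i
      exact le_trans (le_abs_self _) (le_trans h3 (le_trans (hsmall k h1 h2).le (hδw i)))
    have hinv := inv_lemma hf0 hg0 hfmono hgmono hd.2 hφ hsol (hsub l hl0) hwin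
    rw [pi_norm_lt_iff hε]
    intro i
    have h4 := hinv (k : ℤ) (by omega) i
    rw [Real.norm_eq_abs, abs_of_nonneg h4.1]
    exact lt_of_le_of_lt h4.2 (hlε i)
  · -- attractivity
    intro φ x hφ hsol
    obtain ⟨B, hB⟩ : ∃ B : ℝ, ∀ k : ℤ, -(dmax:ℤ) ≤ k → k ≤ 0 → ∀ i, φ k i ≤ B := by
      refine ⟨Finset.sup' (Finset.range (dmax+1)) ⟨0, Finset.mem_range.2 (Nat.succ_pos _)⟩
        (fun t => ‖φ (-(t:ℤ))‖), ?_⟩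
      intro k h1 h2 i
      have ht : ((-k).toNat : ℤ) = -k := Int.toNat_of_nonneg (by omega)
      have hmem : (-k).toNat ∈ Finset.range (dmax+1) := Finset.mem_range.2 (by omega)
      have h3 : |φ k i| ≤ ‖φ k‖ := by
        rw [← Real.norm_eq_abs]; exact norm_le_pi_norm (φ k) i
      calc φ k i ≤ |φ k i| := le_abs_self _
        _ ≤ ‖φ k‖ := h3
        _ = ‖φ (-(((-k).toNat : ℕ):ℤ))‖ := by rw [ht, neg_neg]
        _ ≤ _ := Finset.le_sup' (fun t : ℕ => ‖φ (-(t:ℤ))‖) hmem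
    obtain ⟨l, hl0, hlB⟩ := exists_large_scale hr hvpos B
    set w : ℕ → Fin n → ℝ := fun m i => (l * θ^m) ^ r i * v i with hwdef
    have hlθ : ∀ m : ℕ, 0 < l * θ^m := fun m => mul_pos hl0 (pow_pos hθ0 m)
    have hwrec : ∀ m i, f (w m) i + g (w m) i ≤ w (m+1) i := by
      intro m i
      refine le_trans (hcontr (l * θ^m) (hlθ m) i) (le_of_eq ?_)
      have h5 : (l * θ^(m+1)) = (l * θ^m) * θ := by ring
      show θ ^ r i * ((l * θ^m) ^ r i * v i) = (l * θ^(m+1)) ^ r i * v i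
      rw [h5, Real.mul_rpow (hlθ m).le hθ0.le]; ring
    have hwdec : ∀ m i, w (m+1) i ≤ w m i := by
      intro m i
      refine mul_le_mul_of_nonneg_right ?_ (hvpos i).le
      refine Real.rpow_le_rpow (hlθ (m+1)).le ?_ (hr i).le
      have : θ^(m+1) ≤ θ^m := pow_le_pow_of_le_one hθ0.le hθ1.le (Nat.le_succ m)
      nlinarith
    have hsub0 : ∀ i, f (w 0) i + g (w 0) i ≤ w 0 i := fun i => le_trans (hwrec 0 i) (hwdec 0 i)
    have hwin0 : ∀ k : ℤ, -(dmax : ℤ) ≤ k → k ≤ 0 → ∀ i, φ k i ≤ w 0 i := by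
      intro k h1 h2 i
      refine le_trans (hB k h1 h2 i) (le_of_lt ?_)
      show B < (l * θ^0) ^ r i * v i
      rw [pow_zero, mul_one]
      exact hlB i
    have hinv := inv_lemma hf0 hg0 hfmono hgmono hd.2 hφ hsol hsub0 hwin0
    have hstage : ∀ m, ∃ K : ℕ, ∀ j : ℤ, (K:ℤ) ≤ j → ∀ i, 0 ≤ x j i ∧ x j i ≤ w m i := by
      intro m; induction m with
      | zero => exact ⟨0, fun j hj i => hinv j (by omega) i⟩
      | succ m ih =>
        obtain ⟨K, hK⟩ := ih
        obtain ⟨T, hT⟩ := Filter.eventually_atTop.1 (hd.1.eventually_ge_atTop (K:ℤ))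
        refine ⟨max (T+1) (K+1), ?_⟩
        intro j hj i
        push_cast at hj
        set k := (j-1).toNat with hkdef
        have hk : (k:ℤ) = j - 1 := Int.toNat_of_nonneg (by omega)
        have hkT : T ≤ k := by omega
        have hkK : (K:ℤ) ≤ (k:ℤ) := by omega
        have hjk : j = (k:ℤ) + 1 := by omega
        rw [hjk, hsol.2 k]
        have hxk := hK (k:ℤ) hkK
        have hxD := hK ((k:ℤ) - (d k:ℤ)) (hT k hkT)
        simp only [Pi.add_apply]
        have h1f : f (x (k:ℤ)) i ≤ f (w m) i :=
          hfmono (w m) _ (fun i => (hxk i).1) (fun i => (hxk i).2) i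
        have h1g : g (x ((k:ℤ)-(d k:ℤ))) i ≤ g (w m) i :=
          hgmono (w m) _ (fun i => (hxD i).1) (fun i => (hxD i).2) i
        have h0f : 0 ≤ f (x (k:ℤ)) i := apply_nonneg' hfmono hf0 (fun i => (hxk i).1) i
        have h0g : 0 ≤ g (x ((k:ℤ)-(d k:ℤ))) i :=
          apply_nonneg' hgmono hg0 (fun i => (hxD i).1) i
        exact ⟨add_nonneg h0f h0g, le_trans (add_le_add h1f h1g) (hwrec m i)⟩
    have hwto : Tendsto (fun m => (w m : Fin n → ℝ)) atTop (nhds 0) := by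
      rw [tendsto_pi_nhds]
      intro i
      have heq : ∀ m : ℕ, w m i = (l ^ r i * v i) * (θ ^ r i)^m := by
        intro m
        show (l * θ^m) ^ r i * v i = (l ^ r i * v i) * (θ ^ r i)^m
        rw [Real.mul_rpow hl0.le (pow_pos hθ0 m).le, ← Real.rpow_natCast θ m,
          ← Real.rpow_mul hθ0.le, mul_comm (m:ℝ) (r i), Real.rpow_mul hθ0.le,
          Real.rpow_natCast]
        ring
      simp only [heq]
      have := (tendsto_pow_atTop_nhds_zero_of_lt_one (Real.rpow_nonneg hθ0.le (r i))
        (Real.rpow_lt_one hθ0.le hθ1 (hr i))).const_mul (l ^ r i * v i)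
      simpa using this
    have hnto : Tendsto (fun m => ‖(w m : Fin n → ℝ)‖) atTop (nhds 0) := by
      simpa using hwto.norm
    rw [Metric.tendsto_atTop]
    intro ε hε
    obtain ⟨m, hm⟩ := (hnto.eventually_lt_const hε).exists
    obtain ⟨K, hK⟩ := hstage m
    refine ⟨K, fun k hk => ?_⟩
    rw [dist_zero_right]
    have hxk := hK (k:ℤ) (by exact_mod_cast hk)
    refine lt_of_le_of_lt ?_ hm
    rw [pi_norm_le_iff_of_nonneg (norm_nonneg _)]
    intro i
    rw [Real.norm_eq_abs, abs_of_nonneg (hxk i).1]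
    refine le_trans (hxk i).2 ?_
    have := norm_le_pi_norm (w m) i
    rw [Real.norm_eq_abs] at this
    exact le_trans (le_abs_self _) this

lemma vec_of_gas (hr : ∀ i, 0 < r i) (hf0 : f 0 = 0) (hg0 : g 0 = 0)
    (hfc : Continuous f) (hgc : Continuous g)
    (hfmono : NonDecOn n f) (hgmono : NonDecOn n g)
    (hfhom : Homogeneous n r 0 f) (hghom : Homogeneous n r 0 g)
    (hgas : GASD n f g (fun _ => 0) 0) :
    ∃ v : Fin n → ℝ, (∀ i, 0 < v i) ∧ ∀ i, f v i + g v i < v i := by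
  rcases isEmpty_or_nonempty (Fin n) with he | he
  · exact ⟨fun _ => 1, fun i => isEmptyElim i, fun i => isEmptyElim i⟩
  set F : (Fin n → ℝ) → Fin n → ℝ := fun y => f y + g y with hFdef
  set u : ℕ → Fin n → ℝ := fun k => F^[k] (fun _ => 1) with hudef
  have hu0 : ∀ k i, 0 ≤ u k i := by
    intro k
    induction k with
    | zero => intro i; exact zero_le_one
    | succ k ih =>
      intro i
      have h1 : u (k+1) = F (u k) := Function.iterate_succ_apply' F k _
      rw [h1]
      exact add_nonneg (apply_nonneg' hfmono hf0 ih i) (apply_nonneg' hgmono hg0 ih i)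
  set X : ℤ → Fin n → ℝ := fun k => u k.toNat with hXdef
  have hsol : IsSolutionD n f g (fun _ => 0) 0 X X := by
    constructor
    · intro k _ _; rfl
    · intro k
      show u ((k:ℤ)+1).toNat = f (u ((k:ℤ)).toNat) + g (u (((k:ℤ) - ((0:ℕ):ℤ))).toNat)
      have h1 : ((k:ℤ)+1).toNat = k+1 := by omega
      have h2 : ((k:ℤ)).toNat = k := by omega
      have h3 : ((k:ℤ) - ((0:ℕ):ℤ)).toNat = k := by omega
      rw [h1, h2, h3]
      exact Function.iterate_succ_apply' F k _
  have hφ : NonnegInitD n 0 X := by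
    intro k h1 h2 i
    have hk : k = 0 := by omega
    subst hk
    exact hu0 0 i
  have hten := hgas.2 X X hφ hsol
  have hten' : Tendsto u atTop (nhds 0) := by
    have heq : (fun k : ℕ => X (k:ℤ)) = u := funext fun k => by simp [hXdef]
    rwa [heq] at hten
  have hnorm : Tendsto (fun k => ‖u k‖) atTop (nhds 0) := by simpa using hten'.norm
  obtain ⟨m, hmlt, hm1⟩ :=
    ((hnorm.eventually_lt_const one_pos).and (eventually_ge_atTop 1)).exists
  have hum : ∀ i, u m i < 1 := by
    intro i
    have h1 := norm_le_pi_norm (u m) i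
    rw [Real.norm_eq_abs] at h1
    exact lt_of_le_of_lt (le_trans (le_abs_self _) h1) hmlt
  set M := Finset.univ.sup' Finset.univ_nonempty (u m) with hMdef
  have hM1 : M < 1 := (Finset.sup'_lt_iff _).2 fun i _ => hum i
  set η := (1 - M)/2 with hηdef
  have hηM : 0 ≤ M := le_trans (hu0 m (Classical.arbitrary _))
    (Finset.le_sup' _ (Finset.mem_univ _))
  have hη : 0 < η := by rw [hηdef]; linarith
  have hmη : ∀ i, u m i + η < 1 := by
    intro i
    have h1 : u m i ≤ M := Finset.le_sup' _ (Finset.mem_univ i)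
    rw [hηdef]; linarith
  have hcont : ∀ (p : Fin n → ℝ) (e : ℝ), 0 < e →
      ∃ ρ > 0, ∀ y, dist y p < ρ → dist (F y) (F p) < e :=
    fun p e hε => Metric.continuous_iff.1 (hfc.add hgc) p e hε
  set rad : (Fin n → ℝ) → {e : ℝ // 0 < e} → {e : ℝ // 0 < e} :=
    fun p e => ⟨(hcont p e.1 e.2).choose, (hcont p e.1 e.2).choose_spec.1⟩ with hraddef
  have hradspec : ∀ p e (y : Fin n → ℝ), dist y p < (rad p e).1 → dist (F y) (F p) < e.1 :=
    fun p e y hy => (hcont p e.1 e.2).choose_spec.2 y hy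
  set P : ℕ → {e : ℝ // 0 < e} := fun t => Nat.rec (rad (u (m-1)) ⟨η, hη⟩)
    (fun t ih => rad (u (m-2-t)) ⟨ih.1/2, div_pos ih.2 two_pos⟩) t with hPdef
  set bp : ℕ → ℝ := fun j => (P (m-1-j)).1/2 with hbpdef
  have hbp0 : ∀ j, 0 < bp j := fun j => div_pos (P (m-1-j)).2 two_pos
  have hspec_last : ∀ y : Fin n → ℝ, dist y (u (m-1)) < (P 0).1 → dist (F y) (u m) < η := by
    intro y hy
    have h1 := hradspec (u (m-1)) ⟨η, hη⟩ y hy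
    have h2 : F (u (m-1)) = u m := by
      have h3 : m - 1 + 1 = m := by omega
      rw [← h3]
      exact (Function.iterate_succ_apply' F (m-1) _).symm
    rwa [h2] at h1
  have hspec_step : ∀ t : ℕ, t + 1 ≤ m - 1 → ∀ y : Fin n → ℝ,
      dist y (u (m-2-t)) < (P (t+1)).1 → dist (F y) (u (m-1-t)) < (P t).1/2 := by
    intro t ht y hy
    have h1 := hradspec (u (m-2-t)) ⟨(P t).1/2, div_pos (P t).2 two_pos⟩ y hy
    have h2 : F (u (m-2-t)) = u (m-1-t) := by
      have h3 : m - 2 - t + 1 = m - 1 - t := by omega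
      rw [← h3]
      exact (Function.iterate_succ_apply' F _ _).symm
    rwa [h2] at h1
  obtain ⟨lam, hlam1, hlam⟩ : ∃ lam : ℝ, lam ∈ Ioi (1:ℝ) ∧
      ∀ i, ((lam ^ (m-1) : ℝ)) ^ r i * (u m i + η) < 1 + bp 0 := by
    refine exists_param_lt (fun i lam => ((lam ^ (m-1) : ℝ)) ^ r i * (u m i + η))
      (fun _ => 1 + bp 0) 1 (Ioi 1) ?_ ?_
    · intro i
      exact (((continuous_pow (m-1)).continuousAt).rpow_const (Or.inr (hr i).le)).mul
        continuousAt_const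
    · intro i
      show ((1:ℝ) ^ (m-1) : ℝ) ^ r i * (u m i + η) < 1 + bp 0
      have h1 : ((1:ℝ) ^ (m-1) : ℝ) ^ r i = 1 := by rw [one_pow, Real.one_rpow]
      rw [h1, one_mul]
      exact lt_trans (hmη i) (by have := hbp0 0; linarith)
  rw [mem_Ioi] at hlam1
  have hlam0 : (0:ℝ) < lam := by linarith
  have hmne : (Finset.range m).Nonempty := ⟨0, Finset.mem_range.2 (by omega)⟩
  set a : ℕ → Fin n → ℝ := fun j i => u j i + bp j with hadef
  set v : Fin n → ℝ := fun i => Finset.inf' (Finset.range m) hmne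
    (fun j => (lam^j)^(r i) * (a j i)) with hvdef
  have hapos : ∀ j i, 0 < a j i := fun j i => by
    have := hu0 j i; have := hbp0 j; rw [hadef]; dsimp only; linarith
  have hterm_pos : ∀ j i, 0 < (lam^j)^(r i) * (a j i) := fun j i =>
    mul_pos (Real.rpow_pos_of_pos (pow_pos hlam0 j) _) (hapos j i)
  have hvpos : ∀ i, 0 < v i := fun i => (Finset.lt_inf'_iff _).2 fun j _ => hterm_pos j i
  have hvle : ∀ j, j < m → ∀ i', v i' ≤ (lam^j)^(r i') * (a j i') := fun j hj i' =>
    Finset.inf'_le _ (Finset.mem_range.2 hj)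
  have hkey : ∀ j, j < m → ∀ i, f v i + g v i ≤ (lam^j)^(r i) * (f (a j) i + g (a j) i) := by
    intro j hj i
    have h1 : f v i ≤ f (fun i' => (lam^j)^(r i') * (a j i')) i :=
      hfmono _ v (fun i' => (hvpos i').le) (hvle j hj) i
    have h2 : g v i ≤ g (fun i' => (lam^j)^(r i') * (a j i')) i :=
      hgmono _ v (fun i' => (hvpos i').le) (hvle j hj) i
    have h3 := hom_apply hfhom (a j) (pow_pos hlam0 j) i
    have h4 := hom_apply hghom (a j) (pow_pos hlam0 j) i
    rw [h3] at h1
    rw [h4] at h2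
    calc f v i + g v i ≤ (lam^j)^(r i) * f (a j) i + (lam^j)^(r i) * g (a j) i :=
          add_le_add h1 h2
      _ = (lam^j)^(r i) * (f (a j) i + g (a j) i) := by ring
  have hdista : ∀ j, dist (a j) (u j) ≤ bp j := by
    intro j
    rw [dist_pi_le_iff (hbp0 j).le]
    intro i'
    have : a j i' - u j i' = bp j := by rw [hadef]; dsimp only; ring
    rw [Real.dist_eq, this, abs_of_nonneg (hbp0 j).le]
  have hFcomp : ∀ (y : Fin n → ℝ) (c : ℝ) (j : ℕ) i, dist (F y) (u j) < c →
      f y i + g y i < u j i + c := by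
    intro y c j i hy
    have h1 := dist_le_pi_dist (F y) (u j) i
    have h2 : |f y i + g y i - u j i| < c := by
      rw [← Real.dist_eq]
      exact lt_of_le_of_lt h1 hy
    have := abs_lt.1 h2
    linarith [this.1, this.2]
  refine ⟨v, hvpos, ?_⟩
  intro i
  rw [hvdef]
  refine (Finset.lt_inf'_iff _).2 ?_
  intro j' hj'
  rw [Finset.mem_range] at hj'
  rcases Nat.eq_zero_or_pos j' with hj0 | hjpos
  · subst hj0
    have hb : bp (m-1) = (P 0).1/2 := by rw [hbpdef]; dsimp only; rw [Nat.sub_self]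
    have hlt : dist (a (m-1)) (u (m-1)) < (P 0).1 := by
      refine lt_of_le_of_lt (hdista (m-1)) ?_
      rw [hb]
      have := (P 0).2
      linarith
    have hcomp : f (a (m-1)) i + g (a (m-1)) i < u m i + η :=
      hFcomp _ _ _ i (hspec_last (a (m-1)) hlt)
    have hpos : (0:ℝ) < (lam^(m-1))^(r i) := Real.rpow_pos_of_pos (pow_pos hlam0 _) _
    have hu01 : u 0 i = 1 := rfl
    calc f v i + g v i ≤ (lam^(m-1))^(r i) * (f (a (m-1)) i + g (a (m-1)) i) :=
          hkey (m-1) (by omega) i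
      _ < (lam^(m-1))^(r i) * (u m i + η) := by
          exact mul_lt_mul_of_pos_left hcomp hpos
      _ < 1 + bp 0 := hlam i
      _ = (lam^0)^(r i) * (a 0 i) := by
          rw [pow_zero, Real.one_rpow, one_mul, hadef]; dsimp only; rw [hu01]
  · -- j' ≥ 1
    set t := m - 1 - j' with htdef
    have hT1 : t + 1 ≤ m - 1 := by omega
    have hpoint : m - 2 - t = j' - 1 := by omega
    have hidx : m - 1 - (j'-1) = t + 1 := by omega
    have hbj1 : bp (j'-1) = (P (t+1)).1/2 := by rw [hbpdef]; dsimp only; rw [hidx]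
    have hlt : dist (a (j'-1)) (u (m-2-t)) < (P (t+1)).1 := by
      rw [hpoint]
      refine lt_of_le_of_lt (hdista (j'-1)) ?_
      rw [hbj1]
      have := (P (t+1)).2
      linarith
    have hstep := hspec_step t hT1 (a (j'-1)) hlt
    have hmt : m - 1 - t = j' := by omega
    rw [hmt] at hstep
    have hmargin : (P t).1/2 = bp j' := by rw [hbpdef]
    rw [hmargin] at hstep
    have hcomp : f (a (j'-1)) i + g (a (j'-1)) i < u j' i + bp j' := hFcomp _ _ _ i hstep
    have hpos : (0:ℝ) < (lam^(j'-1))^(r i) := Real.rpow_pos_of_pos (pow_pos hlam0 _) _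
    have hbase : (lam^(j'-1))^(r i) < (lam^(j'))^(r i) := by
      refine Real.rpow_lt_rpow (pow_pos hlam0 _).le ?_ (hr i)
      exact pow_lt_pow_right₀ hlam1 (by omega)
    have haj : 0 < u j' i + bp j' := by have := hu0 j' i; have := hbp0 j'; linarith
    calc f v i + g v i ≤ (lam^(j'-1))^(r i) * (f (a (j'-1)) i + g (a (j'-1)) i) :=
          hkey (j'-1) (by omega) i
      _ < (lam^(j'-1))^(r i) * (u j' i + bp j') := mul_lt_mul_of_pos_left hcomp hpos
      _ < (lam^(j'))^(r i) * (u j' i + bp j') := mul_lt_mul_of_pos_right hbase haj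
      _ = (lam^(j'))^(r i) * (a j' i) := by rw [hadef]

end DHND

/-- Theorem (delay-independent stability of discrete-time homogeneous non-decreasing systems
of degree zero): for `x(k+1) = f(x(k)) + g(x(k-d(k)))` with `f, g` continuous, non-decreasing
on the nonnegative orthant, `f(0) = g(0) = 0`, and both homogeneous of degree `p = 0` with
respect to the dilation map `δ_λ^r`, the following are equivalent:
(i) there exists `v > 0` with `f(v) + g(v) < v`;
(ii) the system is globally asymptotically stable for every delay satisfying Assumption C;
(iii) the undelayed system is globally asymptotically stable. -/
theorem discrete_homogeneous_nondecreasing_delay_independent_stability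
    (n : ℕ) (f g : (Fin n → ℝ) → Fin n → ℝ)
    (r : Fin n → ℝ) (hr : ∀ i, 0 < r i)
    (hf0 : f 0 = 0) (hg0 : g 0 = 0)
    (hfc : Continuous f) (hgc : Continuous g)
    (hfmono : NonDecOn n f) (hgmono : NonDecOn n g)
    (hfhom : Homogeneous n r 0 f) (hghom : Homogeneous n r 0 g) :
    ((∃ v : Fin n → ℝ, (∀ i, 0 < v i) ∧ ∀ i, f v i + g v i < v i) ↔
      (∀ d : ℕ → ℕ, ∀ dmax : ℕ, DelayC d dmax → GASD n f g d dmax)) ∧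
    ((∀ d : ℕ → ℕ, ∀ dmax : ℕ, DelayC d dmax → GASD n f g d dmax) ↔
      GASD n f g (fun _ => 0) 0) := by
  have imp1 : (∃ v : Fin n → ℝ, (∀ i, 0 < v i) ∧ ∀ i, f v i + g v i < v i) →
      (∀ d : ℕ → ℕ, ∀ dmax : ℕ, DelayC d dmax → GASD n f g d dmax) := by
    rintro ⟨v, h1, h2⟩ d dmax hd
    exact DHND.gas_of_vec hr hf0 hg0 hfmono hgmono hfhom hghom h1 h2 d dmax hd
  have imp2 : (∀ d : ℕ → ℕ, ∀ dmax : ℕ, DelayC d dmax → GASD n f g d dmax) →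
      GASD n f g (fun _ => 0) 0 := by
    intro h
    refine h _ 0 ⟨?_, ?_⟩
    · simpa using tendsto_natCast_atTop_atTop (R := ℤ)
    · intro k; simpa using Int.natCast_nonneg k
  have imp3 : GASD n f g (fun _ => 0) 0 →
      (∃ v : Fin n → ℝ, (∀ i, 0 < v i) ∧ ∀ i, f v i + g v i < v i) :=
    DHND.vec_of_gas hr hf0 hg0 hfc hgc hfmono hgmono hfhom hghom
  exact ⟨⟨imp1, fun h => imp3 (imp2 h)⟩, ⟨imp2, fun h => imp1 (imp3 h)⟩⟩
end

section
/- Consider the discrete-time delayed system Σ: x(k+1) = f(x(k)) + g(x(k−d(k))) for k ∈ ℕ_0, with x(k) = φ(k) for k ∈ {−d_max,…,0}, where f(0) = g(0) = 0, f and g are non-decreasing on ℝ^n_+, both f and g are homogeneous of degree p > 0 with respect to the dilation map δ_λ^r, and the delay d satisfies Assumption C. If there exists a vector v > 0 such that f(v) + g(v) < v (componentwise), then the origin is asymptotically stable with respect to initial conditions satisfying 0 ≤ φ(k) ≤ v for all k ∈ {−d_max,…,0}; in particular, every solution from such an initial condition converges to the origin as k → ∞. -/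
open Real Filter Set Asymptotics Topology

/-- Corollary (local asymptotic stability, degree `p > 0`): for the discrete system
`x(k+1) = f(x(k)) + g(x(k-d(k)))` with `f, g` non-decreasing on the nonnegative orthant,
homogeneous of degree `p > 0`, delay satisfying Assumption C, and `v > 0` with
`f(v) + g(v) < v`, the origin is asymptotically stable with respect to initial conditions
`0 ≤ φ(k) ≤ v`: the zero solution is Lyapunov stable over such initial conditions, and every
solution from such an initial condition converges to the origin. -/
theorem discrete_homogeneous_nondecreasing_local_asymptotic_stability
    (n : ℕ) (f g : (Fin n → ℝ) → Fin n → ℝ)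
    (r : Fin n → ℝ) (hr : ∀ i, 0 < r i) (p : ℝ) (hp : 0 < p)
    (hf0 : f 0 = 0) (hg0 : g 0 = 0)
    (hfc : Continuous f) (hgc : Continuous g)
    (hfmono : NonDecOn n f) (hgmono : NonDecOn n g)
    (hfhom : Homogeneous n r p f) (hghom : Homogeneous n r p g)
    (d : ℕ → ℕ) (dmax : ℕ) (hd : DelayC d dmax)
    (v : Fin n → ℝ) (hv : ∀ i, 0 < v i) (hfgv : ∀ i, f v i + g v i < v i) :
    (∀ ε > (0 : ℝ), ∃ δ > (0 : ℝ), ∀ φ x : ℤ → Fin n → ℝ,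
        (∀ k : ℤ, -(dmax : ℤ) ≤ k → k ≤ 0 → ∀ i, 0 ≤ φ k i ∧ φ k i ≤ v i) →
        IsSolutionD n f g d dmax φ x →
        (∀ k : ℤ, -(dmax : ℤ) ≤ k → k ≤ 0 → ‖φ k‖ < δ) →
        ∀ k : ℕ, ‖x (k : ℤ)‖ < ε) ∧
    ∀ φ x : ℤ → Fin n → ℝ,
      (∀ k : ℤ, -(dmax : ℤ) ≤ k → k ≤ 0 → ∀ i, 0 ≤ φ k i ∧ φ k i ≤ v i) →
      IsSolutionD n f g d dmax φ x →
      Tendsto (fun k : ℕ => x (k : ℤ)) atTop (nhds 0) := by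
  classical
  have hfnn : ∀ (a : Fin n → ℝ), (∀ i, 0 ≤ a i) → ∀ i, 0 ≤ f a i := by
    intro a ha i
    have h := hfmono a 0 (fun j => le_rfl) (fun j => ha j) i
    simpa [hf0] using h
  have hgnn : ∀ (a : Fin n → ℝ), (∀ i, 0 ≤ a i) → ∀ i, 0 ≤ g a i := by
    intro a ha i
    have h := hgmono a 0 (fun j => le_rfl) (fun j => ha j) i
    simpa [hg0] using h
  -- one-step estimate
  have step : ∀ (lam : ℝ), 0 < lam → lam ≤ 1 → ∀ a b : Fin n → ℝ,
      (∀ i, 0 ≤ a i ∧ a i ≤ lam ^ r i * v i) →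
      (∀ i, 0 ≤ b i ∧ b i ≤ lam ^ r i * v i) →
      ∀ i, 0 ≤ f a i + g b i ∧ f a i + g b i ≤ lam ^ r i * (f v i + g v i) := by
    intro lam hl hl1 a b ha hb i
    have h1 : f a i ≤ f (fun j => lam ^ r j * v j) i :=
      hfmono _ a (fun j => (ha j).1) (fun j => (ha j).2) i
    have h2 : g b i ≤ g (fun j => lam ^ r j * v j) i :=
      hgmono _ b (fun j => (hb j).1) (fun j => (hb j).2) i
    rw [hfhom v lam hl] at h1
    rw [hghom v lam hl] at h2
    have hfa0 : 0 ≤ f a i := hfnn a (fun j => (ha j).1) i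
    have hgb0 : 0 ≤ g b i := hgnn b (fun j => (hb j).1) i
    refine ⟨add_nonneg hfa0 hgb0, ?_⟩
    have hsum : f a i + g b i ≤ lam ^ p * (lam ^ r i * (f v i + g v i)) := by
      calc f a i + g b i ≤ lam ^ p * (lam ^ r i * f v i) + lam ^ p * (lam ^ r i * g v i) :=
            add_le_add h1 h2
        _ = lam ^ p * (lam ^ r i * (f v i + g v i)) := by ring
    refine hsum.trans ?_
    have hpe : lam ^ p ≤ 1 := Real.rpow_le_one hl.le hl1 hp.le
    have hnn : 0 ≤ lam ^ r i * (f v i + g v i) :=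
      mul_nonneg (Real.rpow_nonneg hl.le _)
        (add_nonneg (hfnn v (fun j => (hv j).le) i) (hgnn v (fun j => (hv j).le) i))
    exact mul_le_of_le_one_left hnn hpe
  -- invariance of the box [0, δ_lam v]
  have inv : ∀ (lam : ℝ), 0 < lam → lam ≤ 1 → ∀ (x : ℤ → Fin n → ℝ),
      (∀ k : ℕ, x ((k:ℤ)+1) = f (x (k:ℤ)) + g (x ((k:ℤ) - (d k : ℤ)))) →
      (∀ m : ℤ, -(dmax:ℤ) ≤ m → m ≤ 0 → ∀ i, 0 ≤ x m i ∧ x m i ≤ lam ^ r i * v i) →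
      ∀ m : ℤ, -(dmax:ℤ) ≤ m → ∀ i, 0 ≤ x m i ∧ x m i ≤ lam ^ r i * v i := by
    intro lam hl hl1 x hrec hinit
    have main : ∀ N : ℕ, ∀ m : ℤ, -(dmax:ℤ) ≤ m → m ≤ (N:ℤ) →
        ∀ i, 0 ≤ x m i ∧ x m i ≤ lam ^ r i * v i := by
      intro N
      induction N with
      | zero => intro m hm hm0; exact hinit m hm (by exact_mod_cast hm0)
      | succ N ih =>
        intro m hm hmN
        rcases le_or_gt m (N:ℤ) with h | h
        · exact ih m hm h
        · have hm1 : m = (N:ℤ)+1 := by push_cast at hmN; omega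
          have hx : x m = f (x (N:ℤ)) + g (x ((N:ℤ) - (d N : ℤ))) := by
            rw [hm1]; exact hrec N
          intro i
          have ha := ih (N:ℤ) (by omega) le_rfl
          have hb := ih ((N:ℤ) - (d N : ℤ)) (hd.2 N) (by omega)
          have hs := step lam hl hl1 _ _ ha hb i
          rw [hx]
          refine ⟨hs.1, hs.2.trans ?_⟩
          exact mul_le_mul_of_nonneg_left (hfgv i).le (Real.rpow_nonneg hl.le _)
    intro m hm
    exact main m.toNat m hm (Int.self_le_toNat m)
  -- choice of contraction factor q
  obtain ⟨q, hq01, hqv⟩ : ∃ q : ℝ, q ∈ Ioo (0:ℝ) 1 ∧ ∀ i, f v i + g v i ≤ q ^ r i * v i := by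
    have hev : ∀ᶠ s in 𝓝[<] (1:ℝ), s ∈ Ioo (0:ℝ) 1 ∧
        ∀ i, f v i + g v i ≤ s ^ r i * v i := by
      have hIoo : Ioo (0:ℝ) 1 ∈ 𝓝[<] (1:ℝ) :=
        Ioo_mem_nhdsLT_of_mem (by norm_num : (1:ℝ) ∈ Ioc (0:ℝ) 1)
      have hIoo' : ∀ᶠ s in 𝓝[<] (1:ℝ), s ∈ Ioo (0:ℝ) 1 := hIoo
      refine hIoo'.and ?_
      rw [eventually_all]
      intro i
      have hc : ContinuousAt (fun s : ℝ => s ^ r i * v i) 1 :=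
        (Real.continuousAt_rpow_const 1 (r i) (Or.inl one_ne_zero)).mul continuousAt_const
      have ht : Tendsto (fun s : ℝ => s ^ r i * v i) (𝓝[<] (1:ℝ)) (𝓝 (v i)) := by
        have h : Tendsto (fun s : ℝ => s ^ r i * v i) (𝓝[<] (1:ℝ)) (𝓝 ((1:ℝ) ^ r i * v i)) :=
          hc.tendsto.mono_left nhdsWithin_le_nhds
        simpa [Real.one_rpow] using h
      filter_upwards [ht.eventually (lt_mem_nhds (hfgv i))] with s hs using hs.le
    exact hev.exists
  obtain ⟨hq0, hq1⟩ := hq01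
  -- contraction step
  have contract : ∀ (x : ℤ → Fin n → ℝ),
      (∀ k : ℕ, x ((k:ℤ)+1) = f (x (k:ℤ)) + g (x ((k:ℤ) - (d k : ℤ)))) →
      ∀ (lam : ℝ), 0 < lam → lam ≤ 1 → ∀ K : ℤ,
      (∀ m : ℤ, K ≤ m → ∀ i, 0 ≤ x m i ∧ x m i ≤ lam ^ r i * v i) →
      ∃ K' : ℤ, ∀ m : ℤ, K' ≤ m → ∀ i, 0 ≤ x m i ∧ x m i ≤ (lam * q) ^ r i * v i := by
    intro x hrec lam hl hl1 K hK
    have h1 : ∀ᶠ k : ℕ in atTop, K ≤ (k:ℤ) - (d k : ℤ) := hd.1.eventually_ge_atTop K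
    have h2 : ∀ᶠ k : ℕ in atTop, K ≤ (k:ℤ) :=
      (tendsto_natCast_atTop_atTop (R := ℤ)).eventually_ge_atTop K
    obtain ⟨T, hT⟩ := eventually_atTop.1 (h1.and h2)
    refine ⟨(T:ℤ)+1, ?_⟩
    intro m hm i
    have hk0 : (0:ℤ) ≤ m - 1 := by omega
    set k : ℕ := (m-1).toNat with hkdef
    have hkz : (k:ℤ) = m - 1 := Int.toNat_of_nonneg hk0
    have hTk : T ≤ k := by omega
    have hx : x m = f (x (k:ℤ)) + g (x ((k:ℤ) - (d k : ℤ))) := by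
      have h := hrec k
      have hm1 : (k:ℤ)+1 = m := by omega
      rw [hm1] at h
      exact h
    have ha := hK (k:ℤ) (hT k hTk).2
    have hb := hK ((k:ℤ) - (d k : ℤ)) (hT k hTk).1
    have hs := step lam hl hl1 _ _ ha hb i
    rw [hx]
    refine ⟨hs.1, ?_⟩
    have h3 : lam ^ r i * (f v i + g v i) ≤ lam ^ r i * (q ^ r i * v i) :=
      mul_le_mul_of_nonneg_left (hqv i) (Real.rpow_nonneg hl.le _)
    refine hs.2.trans (h3.trans ?_)
    rw [Real.mul_rpow hl.le hq0.le, mul_assoc]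
  -- iterated contraction
  have iter : ∀ (x : ℤ → Fin n → ℝ),
      (∀ k : ℕ, x ((k:ℤ)+1) = f (x (k:ℤ)) + g (x ((k:ℤ) - (d k : ℤ)))) →
      (∀ m : ℤ, -(dmax:ℤ) ≤ m → m ≤ 0 → ∀ i, 0 ≤ x m i ∧ x m i ≤ v i) →
      ∀ j : ℕ, ∃ K : ℤ, ∀ m : ℤ, K ≤ m → ∀ i, 0 ≤ x m i ∧ x m i ≤ (q ^ j) ^ r i * v i := by
    intro x hrec hist j
    induction j with
    | zero =>
      refine ⟨-(dmax:ℤ), ?_⟩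
      intro m hm i
      have h := inv 1 one_pos le_rfl x hrec
        (fun m' h1 h2 i' => by simpa [Real.one_rpow] using hist m' h1 h2 i') m hm i
      simpa [Real.one_rpow] using h
    | succ j ih =>
      obtain ⟨K, hK⟩ := ih
      obtain ⟨K', hK'⟩ := contract x hrec (q ^ j) (pow_pos hq0 j)
        (pow_le_one₀ hq0.le hq1.le) K hK
      refine ⟨K', ?_⟩
      intro m hm i
      have h := hK' m hm i
      rwa [← pow_succ] at h
  constructor
  · -- Lyapunov stability
    intro ε hε
    rcases isEmpty_or_nonempty (Fin n) with he | he
    · refine ⟨1, one_pos, ?_⟩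
      intro φ x hinit hsol hsmall k
      have hx0 : x (k:ℤ) = 0 := funext fun i => isEmptyElim i
      rw [hx0, norm_zero]; exact hε
    · obtain ⟨lam, hlam1, hlam2⟩ : ∃ lam : ℝ, lam ∈ Ioc (0:ℝ) 1 ∧
          ∀ i, lam ^ r i * v i < ε := by
        have hev : ∀ᶠ s in 𝓝[>] (0:ℝ), s ∈ Ioc (0:ℝ) 1 ∧ ∀ i, s ^ r i * v i < ε := by
          have hIoc : Ioc (0:ℝ) 1 ∈ 𝓝[>] (0:ℝ) :=
            Ioc_mem_nhdsGT_of_mem (by norm_num : (0:ℝ) ∈ Ico (0:ℝ) 1)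
          have hIoc' : ∀ᶠ s in 𝓝[>] (0:ℝ), s ∈ Ioc (0:ℝ) 1 := hIoc
          refine hIoc'.and ?_
          rw [eventually_all]
          intro i
          have hc : ContinuousAt (fun s : ℝ => s ^ r i * v i) 0 :=
            (Real.continuousAt_rpow_const 0 (r i) (Or.inr (hr i).le)).mul continuousAt_const
          have ht : Tendsto (fun s : ℝ => s ^ r i * v i) (𝓝[>] (0:ℝ)) (𝓝 0) := by
            have h : Tendsto (fun s : ℝ => s ^ r i * v i) (𝓝[>] (0:ℝ)) (𝓝 ((0:ℝ) ^ r i * v i)) :=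
              hc.tendsto.mono_left nhdsWithin_le_nhds
            simpa [Real.zero_rpow (hr i).ne'] using h
          exact ht.eventually (gt_mem_nhds hε)
        exact hev.exists
      refine ⟨Finset.univ.inf' Finset.univ_nonempty (fun i => lam ^ r i * v i), ?_, ?_⟩
      · rw [gt_iff_lt, Finset.lt_inf'_iff]
        intro i _
        exact mul_pos (Real.rpow_pos_of_pos hlam1.1 _) (hv i)
      · intro φ x hinit hsol hsmall k
        have hbox : ∀ m : ℤ, -(dmax:ℤ) ≤ m → ∀ i, 0 ≤ x m i ∧ x m i ≤ lam ^ r i * v i := by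
          refine inv lam hlam1.1 hlam1.2 x hsol.2 ?_
          intro m h1 h2 i
          rw [hsol.1 m h1 h2]
          refine ⟨(hinit m h1 h2 i).1, ?_⟩
          have hle : φ m i ≤ ‖φ m‖ := by
            calc φ m i ≤ |φ m i| := le_abs_self _
              _ = ‖φ m i‖ := (Real.norm_eq_abs _).symm
              _ ≤ ‖φ m‖ := norm_le_pi_norm (φ m) i
          have := (hle.trans_lt (hsmall m h1 h2)).le
          exact this.trans (Finset.inf'_le _ (Finset.mem_univ i))
        rw [pi_norm_lt_iff hε]
        intro i
        have h := hbox (k:ℤ) (by omega) i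
        rw [Real.norm_eq_abs, abs_of_nonneg h.1]
        exact h.2.trans_lt (hlam2 i)
  · -- attractivity
    intro φ x hinit hsol
    rw [NormedAddCommGroup.tendsto_nhds_zero]
    intro ε hε
    have hist : ∀ m : ℤ, -(dmax:ℤ) ≤ m → m ≤ 0 → ∀ i, 0 ≤ x m i ∧ x m i ≤ v i := by
      intro m h1 h2 i
      rw [hsol.1 m h1 h2]
      exact hinit m h1 h2 i
    obtain ⟨j, hj⟩ : ∃ j : ℕ, ∀ i, (q ^ j) ^ r i * v i < ε := by
      have hev : ∀ᶠ j : ℕ in atTop, ∀ i, (q ^ j) ^ r i * v i < ε := by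
        rw [eventually_all]
        intro i
        have h1 : Tendsto (fun j : ℕ => (q:ℝ) ^ j) atTop (𝓝 0) :=
          tendsto_pow_atTop_nhds_zero_of_lt_one hq0.le hq1
        have hc : ContinuousAt (fun s : ℝ => s ^ r i * v i) 0 :=
          (Real.continuousAt_rpow_const 0 (r i) (Or.inr (hr i).le)).mul continuousAt_const
        have ht : Tendsto (fun j : ℕ => (q ^ j) ^ r i * v i) atTop (𝓝 0) := by
          have h := hc.tendsto.comp h1
          simpa [Function.comp_def, Real.zero_rpow (hr i).ne'] using h
        exact ht.eventually (gt_mem_nhds hε)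
      exact hev.exists
    obtain ⟨K, hK⟩ := iter x hsol.2 hist j
    have hev : ∀ᶠ k : ℕ in atTop, K ≤ (k:ℤ) :=
      (tendsto_natCast_atTop_atTop (R := ℤ)).eventually_ge_atTop K
    filter_upwards [hev] with k hk
    rw [pi_norm_lt_iff hε]
    intro i
    have h := hK (k:ℤ) hk i
    rw [Real.norm_eq_abs, abs_of_nonneg h.1]
    exact h.2.trans_lt (hj i)
end

section
/- Consider the discrete-time delayed system Σ: x(k+1) = f(x(k)) + g(x(k−d(k))) for k ∈ ℕ_0, with x(k) = φ(k) for k ∈ {−d_max,…,0}, where f(0) = g(0) = 0, f and g are non-decreasing on ℝ^n_+, both f and g are homogeneous of degree p = 0 with respect to the dilation map δ_λ^r, the delay d satisfies Assumption C, and there exists v > 0 with f(v) + g(v) < v. Let μ : ℕ → ℝ_+ be a function such that: (i) μ(k) > 0 for all k ∈ ℕ; (ii) μ(k+1) ≥ μ(k) for all k ∈ ℕ; (iii) μ(k) → +∞ as k → +∞; and (iv) the limits L_1 := lim_{k→∞} μ(k+1)/μ(k) and L_2 := lim_{k→∞} μ(k+1)/μ(k−d(k)) exist and for each i ∈ {1,…,n}: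 L_1^{r_i/r_max}·f_i(v)/v_i + L_2^{r_i/r_max}·g_i(v)/v_i < 1. Then every solution of Σ starting from a nonnegative initial condition satisfies, for each i, (x_i(k)/v_i)^{r_max/r_i} = O(1/μ(k)) as k → ∞, i.e., there is C > 0 with (x_i(k)/v_i)^{r_max/r_i} ≤ C/μ(k) for all k ∈ ℕ. -/
open Real Filter Set Asymptotics

/-- Theorem (discrete μ-stability, degree-zero case): under Assumption C on the delay and the
existence of `v > 0` with `f(v) + g(v) < v`, if `μ : ℕ → ℝ` is positive, non-decreasing and
tends to infinity, and the limits `L₁ = lim μ(k+1)/μ(k)` and `L₂ = lim μ(k+1)/μ(k-d(k))`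
exist and satisfy `L₁^{rᵢ/rmax} fᵢ(v)/vᵢ + L₂^{rᵢ/rmax} gᵢ(v)/vᵢ < 1` for all `i`, then
every solution from a nonnegative initial condition satisfies
`(xᵢ(k)/vᵢ)^{rmax/rᵢ} = O(1/μ(k))`. -/
theorem discrete_homogeneous_nondecreasing_mu_stability
    (n : ℕ) (f g : (Fin n → ℝ) → Fin n → ℝ)
    (r : Fin n → ℝ) (hr : ∀ i, 0 < r i)
    (rmax : ℝ) (hrmax_ub : ∀ i, r i ≤ rmax) (hrmax_mem : ∃ i, r i = rmax)
    (hf0 : f 0 = 0) (hg0 : g 0 = 0)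
    (hfc : Continuous f) (hgc : Continuous g)
    (hfmono : NonDecOn n f) (hgmono : NonDecOn n g)
    (hfhom : Homogeneous n r 0 f) (hghom : Homogeneous n r 0 g)
    (d : ℕ → ℕ) (dmax : ℕ) (hd : DelayC d dmax)
    (v : Fin n → ℝ) (hv : ∀ i, 0 < v i) (hfgv : ∀ i, f v i + g v i < v i)
    (μ : ℕ → ℝ)
    (hμpos : ∀ k : ℕ, 1 ≤ k → 0 < μ k)
    (hμmono : ∀ k : ℕ, 1 ≤ k → μ k ≤ μ (k + 1))
    (hμinf : Tendsto μ atTop atTop)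
    (L₁ L₂ : ℝ)
    (hL₁ : Tendsto (fun k : ℕ => μ (k + 1) / μ k) atTop (nhds L₁))
    (hL₂ : Tendsto (fun k : ℕ => μ (k + 1) / μ ((k : ℤ) - (d k : ℤ)).toNat) atTop (nhds L₂))
    (hcond : ∀ i, L₁ ^ (r i / rmax) * (f v i / v i) +
        L₂ ^ (r i / rmax) * (g v i / v i) < 1)
    (φ x : ℤ → Fin n → ℝ)
    (hφ : NonnegInitD n dmax φ)
    (hx : IsSolutionD n f g d dmax φ x) :
    ∀ i, ∃ C > (0 : ℝ), ∀ k : ℕ, 1 ≤ k →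
      (x (k : ℤ) i / v i) ^ (rmax / r i) ≤ C / μ k := by
  intro i
  haveI : Nonempty (Fin n) := ⟨i⟩
  obtain ⟨hx0, hrec⟩ := hx
  obtain ⟨i₀, hi₀⟩ := hrmax_mem
  have hrmaxpos : 0 < rmax := hi₀ ▸ hr i₀
  have hrmaxne : rmax ≠ 0 := ne_of_gt hrmaxpos
  have hepos : ∀ j, 0 < r j / rmax := fun j => div_pos (hr j) hrmaxpos
  -- monotonicity of μ on [1, ∞)
  have hμle : ∀ a b : ℕ, 1 ≤ a → a ≤ b → μ a ≤ μ b := by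
    intro a b ha hab
    induction b, hab using Nat.le_induction with
    | base => exact le_refl _
    | succ b hb ih => exact ih.trans (hμmono b (ha.trans hb))
  -- nonnegativity of the solution
  have hxnnN : ∀ N : ℕ, ∀ k : ℤ, -(dmax:ℤ) ≤ k → k ≤ N → ∀ j, 0 ≤ x k j := by
    intro N
    induction N with
    | zero =>
      intro k h1 h2 j
      rw [hx0 k h1 (by exact_mod_cast h2)]
      exact hφ k h1 (by exact_mod_cast h2) j
    | succ N ih =>
      intro k h1 h2 j
      rcases le_or_gt k N with h | h
      · exact ih k h1 h j
      · have hk : k = (N:ℤ) + 1 := le_antisymm (by exact_mod_cast h2) h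
        subst hk
        rw [hrec N]
        have h1' : 0 ≤ f (x (N:ℤ)) j := by
          have := hfmono (x (N:ℤ)) 0 (fun _ => le_refl 0)
            (fun j => ih (N:ℤ) (by omega) (le_refl _) j) j
          rwa [hf0, Pi.zero_apply] at this
        have h2' : 0 ≤ g (x ((N:ℤ) - (d N : ℤ))) j := by
          have hge := hd.2 N
          have := hgmono (x ((N:ℤ) - (d N : ℤ))) 0 (fun _ => le_refl 0)
            (fun j => ih ((N:ℤ) - (d N : ℤ)) hge (by omega) j) j
          rwa [hg0, Pi.zero_apply] at this
        simpa using add_nonneg h1' h2'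
  have hxnn : ∀ k : ℤ, -(dmax:ℤ) ≤ k → ∀ j, 0 ≤ x k j := by
    intro k h1 j
    rcases le_or_gt k 0 with h | h
    · exact hxnnN 0 k h1 (by exact_mod_cast h) j
    · exact hxnnN k.toNat k h1 (Int.self_le_toNat k) j
  -- a uniform bound A on the initial history
  obtain ⟨A, hA⟩ := Finset.exists_le
    (((Finset.Icc (-(dmax:ℤ)) 0) ×ˢ (Finset.univ : Finset (Fin n))).image
      (fun p => x p.1 p.2 / v p.2))
  have hAbd : ∀ k : ℤ, -(dmax:ℤ) ≤ k → k ≤ 0 → ∀ j, x k j / v j ≤ A := by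
    intro k h1 h2 j
    exact hA _ (Finset.mem_image.2 ⟨(k, j), by
      simp [Finset.mem_Icc, h1, h2], rfl⟩)
  -- rmin
  set rmin : ℝ := (Finset.univ : Finset (Fin n)).inf' Finset.univ_nonempty r with hrmin_def
  have hrminpos : 0 < rmin := by
    rw [hrmin_def]
    exact (Finset.lt_inf'_iff _).2 fun j _ => hr j
  have hrmin_le : ∀ j, rmin ≤ r j := fun j => Finset.inf'_le _ (Finset.mem_univ j)
  -- Λ : the dilation parameter bounding the whole solution
  set Λ : ℝ := max 1 ((|A| + 1) ^ (1 / rmin)) with hΛdef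
  have hΛ1 : 1 ≤ Λ := le_max_left _ _
  have hΛpos : 0 < Λ := lt_of_lt_of_le one_pos hΛ1
  have hΛlarge : ∀ j, A < Λ ^ r j := by
    intro j
    have h1 : (|A| + 1) ^ (1 / rmin) ≤ Λ := le_max_right _ _
    have h2 : ((|A| + 1) ^ (1 / rmin)) ^ rmin ≤ Λ ^ rmin :=
      Real.rpow_le_rpow (Real.rpow_nonneg (by positivity) _) h1 hrminpos.le
    rw [← Real.rpow_mul (by positivity), one_div, inv_mul_cancel₀ (ne_of_gt hrminpos),
      Real.rpow_one] at h2
    have h3 : Λ ^ rmin ≤ Λ ^ r j := Real.rpow_le_rpow_of_exponent_le hΛ1 (hrmin_le j)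
    have h4 : A < |A| + 1 := lt_of_le_of_lt (le_abs_self A) (by linarith)
    linarith
  -- invariance: the whole solution is bounded by δ_Λ v
  have hbdN : ∀ N : ℕ, ∀ k : ℤ, -(dmax:ℤ) ≤ k → k ≤ N → ∀ j, x k j ≤ Λ ^ r j * v j := by
    intro N
    induction N with
    | zero =>
      intro k h1 h2 j
      have := hAbd k h1 (by exact_mod_cast h2) j
      have hvj := hv j
      have := (div_le_iff₀ hvj).1 (this.trans (hΛlarge j).le)
      linarith
    | succ N ih =>
      intro k h1 h2 j
      rcases le_or_gt k N with h | h
      · exact ih k h1 h j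
      · have hk : k = (N:ℤ) + 1 := le_antisymm (by exact_mod_cast h2) h
        subst hk
        rw [hrec N]
        have hfb : f (x (N:ℤ)) j ≤ Λ ^ r j * f v j := by
          have := hfmono (fun j => Λ ^ r j * v j) (x (N:ℤ))
            (fun j => hxnn (N:ℤ) (by omega) j)
            (fun j => ih (N:ℤ) (by omega) (le_refl _) j) j
          simp only [hfhom v Λ hΛpos, Real.rpow_zero, one_mul] at this
          exact this
        have hgb : g (x ((N:ℤ) - (d N : ℤ))) j ≤ Λ ^ r j * g v j := by
          have hge := hd.2 N
          have := hgmono (fun j => Λ ^ r j * v j) (x ((N:ℤ) - (d N : ℤ)))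
            (fun j => hxnn _ hge j)
            (fun j => ih ((N:ℤ) - (d N : ℤ)) hge (by omega) j) j
          simp only [hghom v Λ hΛpos, Real.rpow_zero, one_mul] at this
          exact this
        have hΛrj : (0:ℝ) < Λ ^ r j := Real.rpow_pos_of_pos hΛpos _
        have := hfgv j
        have : Λ ^ r j * f v j + Λ ^ r j * g v j ≤ Λ ^ r j * v j := by nlinarith
        simp only [Pi.add_apply]
        linarith
  have hbd : ∀ k : ℤ, -(dmax:ℤ) ≤ k → ∀ j, x k j ≤ Λ ^ r j * v j := by
    intro k h1 j
    rcases le_or_gt k 0 with h | h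
    · exact hbdN 0 k h1 (by exact_mod_cast h) j
    · exact hbdN k.toNat k h1 (Int.self_le_toNat k) j
  -- eventual scalar inequality
  have hev : ∀ᶠ k : ℕ in atTop, ∀ j,
      (μ (k+1) / μ k) ^ (r j / rmax) * (f v j / v j) +
      (μ (k+1) / μ ((k:ℤ) - (d k : ℤ)).toNat) ^ (r j / rmax) * (g v j / v j) < 1 := by
    rw [eventually_all]
    intro j
    have hc1 : Tendsto (fun k : ℕ => (μ (k+1) / μ k) ^ (r j / rmax)) atTop
        (nhds (L₁ ^ (r j / rmax))) :=
      ((Real.continuousAt_rpow_const _ _ (Or.inr (hepos j).le)).tendsto).comp hL₁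
    have hc2 : Tendsto (fun k : ℕ =>
        (μ (k+1) / μ ((k:ℤ) - (d k : ℤ)).toNat) ^ (r j / rmax)) atTop
        (nhds (L₂ ^ (r j / rmax))) :=
      ((Real.continuousAt_rpow_const _ _ (Or.inr (hepos j).le)).tendsto).comp hL₂
    have := (hc1.mul_const (f v j / v j)).add (hc2.mul_const (g v j / v j))
    exact this.eventually_lt_const (hcond j)
  obtain ⟨K₀', hK₀'⟩ := eventually_atTop.1 hev
  set K₀ : ℕ := max K₀' 1 with hK₀def
  have hK₀1 : 1 ≤ K₀ := le_max_right _ _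
  -- K : beyond K, the delayed index is ≥ K₀
  have hdel : ∀ᶠ k : ℕ in atTop, (K₀:ℤ) ≤ (k:ℤ) - (d k : ℤ) := hd.1.eventually_ge_atTop _
  obtain ⟨K', hK'⟩ := eventually_atTop.1 hdel
  set K : ℕ := max K' K₀ with hKdef
  have hKK₀ : K₀ ≤ K := le_max_right _ _
  -- the constant C
  set C : ℝ := Λ ^ rmax * μ K with hCdef
  have hC : 0 < C := mul_pos (Real.rpow_pos_of_pos hΛpos _) (hμpos K (hK₀1.trans hKK₀))
  -- bound on the window [K₀, K]
  have hbase : ∀ m : ℕ, K₀ ≤ m → m ≤ K → ∀ j,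
      x (m:ℤ) j ≤ (C / μ m) ^ (r j / rmax) * v j := by
    intro m hm1 hm2 j
    have hμm : 0 < μ m := hμpos m (hK₀1.trans hm1)
    have hrat : Λ ^ rmax ≤ C / μ m := by
      rw [hCdef, le_div_iff₀ hμm]
      have := hμle m K (hK₀1.trans hm1) hm2
      nlinarith [Real.rpow_pos_of_pos hΛpos rmax]
    have h2 : (Λ ^ rmax) ^ (r j / rmax) ≤ (C / μ m) ^ (r j / rmax) :=
      Real.rpow_le_rpow (Real.rpow_nonneg hΛpos.le _) hrat (hepos j).le
    rw [← Real.rpow_mul hΛpos.le] at h2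
    have : rmax * (r j / rmax) = r j := by field_simp
    rw [this] at h2
    have hb := hbd (m:ℤ) (by omega) j
    have hvj := hv j
    nlinarith
  -- key induction
  have key : ∀ k : ℕ, ∀ m : ℕ, K₀ ≤ m → m ≤ max k K → ∀ j,
      x (m:ℤ) j ≤ (C / μ m) ^ (r j / rmax) * v j := by
    intro k
    induction k with
    | zero =>
      intro m hm1 hm2 j
      exact hbase m hm1 (by simpa using hm2) j
    | succ k ih =>
      intro m hm1 hm2 j
      rcases le_or_gt m (max k K) with h | h
      · exact ih m hm1 h j
      · have hmk : m = k + 1 := by omega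
        have hkK : K ≤ k := by omega
        subst hmk
        have hkK₀ : K₀ ≤ k := hKK₀.trans hkK
        have hk1 : 1 ≤ k := hK₀1.trans hkK₀
        -- the delayed index
        have hdle : (K₀:ℤ) ≤ (k:ℤ) - (d k : ℤ) := hK' k ((le_max_left _ _).trans hkK)
        set mk : ℕ := ((k:ℤ) - (d k : ℤ)).toNat with hmkdef
        have hmkz : ((mk:ℤ)) = (k:ℤ) - (d k : ℤ) := Int.toNat_of_nonneg (by omega)
        have hmkK₀ : K₀ ≤ mk := by omega
        have hmkk : mk ≤ k := by omega
        have hμk : 0 < μ k := hμpos k hk1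
        have hμk1 : 0 < μ (k+1) := hμpos (k+1) (by omega)
        have hμmk : 0 < μ mk := hμpos mk (hK₀1.trans hmkK₀)
        -- bounds from the induction hypothesis
        have hxk : ∀ j, x (k:ℤ) j ≤ (C / μ k) ^ (r j / rmax) * v j :=
          fun j => ih k hkK₀ (le_max_left _ _) j
        have hxmk : ∀ j, x ((k:ℤ) - (d k : ℤ)) j ≤ (C / μ mk) ^ (r j / rmax) * v j := by
          intro j
          rw [← hmkz]
          exact ih mk hmkK₀ (hmkk.trans (le_max_left k K)) j
        -- rewrite the dilation vectors
        have hrw : ∀ (c : ℝ), 0 < c → (fun j => (c) ^ (r j / rmax) * v j) =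
            (fun j => (c ^ (1/rmax)) ^ (r j) * v j) := by
          intro c hc
          funext j
          rw [← Real.rpow_mul hc.le]
          congr 1
          ring_nf
        have hc₁ : (0:ℝ) < C / μ k := div_pos hC hμk
        have hc₂ : (0:ℝ) < C / μ mk := div_pos hC hμmk
        have hfb : f (x (k:ℤ)) j ≤ (C / μ k) ^ (r j / rmax) * f v j := by
          have hm := hfmono (fun j => (C / μ k) ^ (r j / rmax) * v j) (x (k:ℤ))
            (fun j => hxnn (k:ℤ) (by omega) j) hxk j
          rw [hrw _ hc₁] at hm
          simp only [hfhom v ((C / μ k) ^ (1/rmax)) (Real.rpow_pos_of_pos hc₁ _),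
            Real.rpow_zero, one_mul] at hm
          rw [← Real.rpow_mul hc₁.le,
            show 1/rmax * r j = r j / rmax by ring] at hm
          exact hm
        have hgb : g (x ((k:ℤ) - (d k : ℤ))) j ≤ (C / μ mk) ^ (r j / rmax) * g v j := by
          have hm := hgmono (fun j => (C / μ mk) ^ (r j / rmax) * v j) (x ((k:ℤ) - (d k : ℤ)))
            (fun j => hxnn _ ((neg_nonpos.2 (Int.ofNat_nonneg dmax)).trans (by omega)) j)
            hxmk j
          rw [hrw _ hc₂] at hm
          simp only [hghom v ((C / μ mk) ^ (1/rmax)) (Real.rpow_pos_of_pos hc₂ _),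
            Real.rpow_zero, one_mul] at hm
          rw [← Real.rpow_mul hc₂.le,
            show 1/rmax * r j = r j / rmax by ring] at hm
          exact hm
        -- scalar inequality at k
        have hsc := hK₀' k (le_trans (le_max_left K₀' 1) (hKK₀.trans hkK)) j
        rw [← hmkdef] at hsc
        -- key rpow identities
        have idP : (C / μ (k+1)) ^ (r j / rmax) * (μ (k+1) / μ k) ^ (r j / rmax)
            = (C / μ k) ^ (r j / rmax) := by
          rw [← Real.mul_rpow (by positivity) (by positivity)]
          congr 1
          field_simp
        have idQ : (C / μ (k+1)) ^ (r j / rmax) * (μ (k+1) / μ mk) ^ (r j / rmax)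
            = (C / μ mk) ^ (r j / rmax) := by
          rw [← Real.mul_rpow (by positivity) (by positivity)]
          congr 1
          field_simp
        have hT : (0:ℝ) < (C / μ (k+1)) ^ (r j / rmax) :=
          Real.rpow_pos_of_pos (div_pos hC hμk1) _
        have hvj := hv j
        have hsc' : (μ (k+1) / μ k) ^ (r j / rmax) * f v j
            + (μ (k+1) / μ mk) ^ (r j / rmax) * g v j ≤ v j := by
          have h1 : ((μ (k+1) / μ k) ^ (r j / rmax) * (f v j / v j) +
              (μ (k+1) / μ mk) ^ (r j / rmax) * (g v j / v j)) * v j ≤ 1 * v j :=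
            mul_le_mul_of_nonneg_right hsc.le hvj.le
          rw [one_mul] at h1
          calc (μ (k+1) / μ k) ^ (r j / rmax) * f v j
              + (μ (k+1) / μ mk) ^ (r j / rmax) * g v j
              = ((μ (k+1) / μ k) ^ (r j / rmax) * (f v j / v j) +
                (μ (k+1) / μ mk) ^ (r j / rmax) * (g v j / v j)) * v j := by
                field_simp
            _ ≤ v j := h1
        have hgoal : (C / μ k) ^ (r j / rmax) * f v j + (C / μ mk) ^ (r j / rmax) * g v j
            ≤ (C / μ (k+1)) ^ (r j / rmax) * v j := by
          rw [← idP, ← idQ]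
          calc (C / μ (k+1)) ^ (r j / rmax) * (μ (k+1) / μ k) ^ (r j / rmax) * f v j +
              (C / μ (k+1)) ^ (r j / rmax) * (μ (k+1) / μ mk) ^ (r j / rmax) * g v j
              = (C / μ (k+1)) ^ (r j / rmax) *
                ((μ (k+1) / μ k) ^ (r j / rmax) * f v j +
                 (μ (k+1) / μ mk) ^ (r j / rmax) * g v j) := by ring
            _ ≤ (C / μ (k+1)) ^ (r j / rmax) * v j :=
                mul_le_mul_of_nonneg_left hsc' hT.le
        have hx1 : x ((k:ℤ)+1) j = f (x (k:ℤ)) j + g (x ((k:ℤ) - (d k : ℤ))) j := by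
          rw [hrec k]; simp
        have : ((k:ℤ)+1) = (((k+1:ℕ)):ℤ) := by push_cast; ring
        rw [← this]
        rw [hx1]
        linarith
  have hmain : ∀ k : ℕ, K₀ ≤ k → ∀ j, x (k:ℤ) j ≤ (C / μ k) ^ (r j / rmax) * v j :=
    fun k hk j => key k k hk (le_max_left _ _) j
  -- final constant
  refine ⟨max C (μ K₀ * Λ ^ rmax), lt_max_of_lt_left hC, ?_⟩
  intro k hk1
  have hμk : 0 < μ k := hμpos k hk1
  have hvi := hv i
  have hΛrmax : (0:ℝ) < Λ ^ rmax := Real.rpow_pos_of_pos hΛpos _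
  rcases le_or_gt K₀ k with h | h
  · have hb := hmain k h i
    have hxki : 0 ≤ x (k:ℤ) i := hxnn (k:ℤ) (by omega) i
    have hcμ : (0:ℝ) ≤ C / μ k := (div_pos hC hμk).le
    have hdiv : x (k:ℤ) i / v i ≤ (C / μ k) ^ (r i / rmax) := by
      rw [div_le_iff₀ hvi]; linarith
    have h1 : (x (k:ℤ) i / v i) ^ (rmax / r i) ≤
        ((C / μ k) ^ (r i / rmax)) ^ (rmax / r i) :=
      Real.rpow_le_rpow (div_nonneg hxki hvi.le) hdiv (div_pos hrmaxpos (hr i)).le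
    rw [← Real.rpow_mul hcμ,
      show r i / rmax * (rmax / r i) = 1 by field_simp [(hr i).ne'], Real.rpow_one] at h1
    exact h1.trans ((div_le_div_iff_of_pos_right hμk).2 (le_max_left _ _))
  · have hb := hbd (k:ℤ) (by omega) i
    have hxki : 0 ≤ x (k:ℤ) i := hxnn (k:ℤ) (by omega) i
    have hdiv : x (k:ℤ) i / v i ≤ Λ ^ r i := by
      rw [div_le_iff₀ hvi]; linarith
    have h1 : (x (k:ℤ) i / v i) ^ (rmax / r i) ≤ (Λ ^ r i) ^ (rmax / r i) :=
      Real.rpow_le_rpow (div_nonneg hxki hvi.le) hdiv (div_pos hrmaxpos (hr i)).le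
    rw [← Real.rpow_mul hΛpos.le,
      show r i * (rmax / r i) = rmax by field_simp [(hr i).ne']] at h1
    have h2 : Λ ^ rmax ≤ max C (μ K₀ * Λ ^ rmax) / μ k := by
      rw [le_div_iff₀ hμk]
      have hμkK₀ : μ k ≤ μ K₀ := hμle k K₀ hk1 h.le
      calc Λ ^ rmax * μ k ≤ Λ ^ rmax * μ K₀ := by nlinarith
        _ = μ K₀ * Λ ^ rmax := by ring
        _ ≤ max C (μ K₀ * Λ ^ rmax) := le_max_right _ _
    exact h1.trans h2
end

section
/- Consider the discrete-time delayed system Σ: x(k+1) = f(x(k)) + g(x(k−d(k))) for k ∈ ℕ_0, with x(k) = φ(k) for k ∈ {−d_max,…,0}, where f(0) = g(0) = 0, f and g are non-decreasing on ℝ^n_+, both f and g are homogeneous of degree p = 0 with respect to the dilation map δ_λ^r, and there exists v > 0 with f(v) + g(v) < v. Suppose there exist T ∈ ℕ and a scalar 0 ≤ α < 1 such that sup_{k>T} d(k)/k = α. For each i, let ξ_i > 0 satisfy f_i(v)/v_i + (1/(1−α))^{(r_i/r_max)·ξ_i} · g_i(v)/v_i = 1. Then Σ is globally power-rate stable: for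 every 0 < ξ < min_{1≤i≤n} ξ_i and every solution x from a nonnegative initial condition, (x_i(k)/v_i)^{r_max/r_i} = O(k^{−ξ}) as k → ∞ for each i. -/
open Real Filter Set Asymptotics

lemma hist_ind (dmax : ℕ) (P : ℤ → Prop)
    (base : ∀ m : ℤ, -(dmax : ℤ) ≤ m → m ≤ 0 → P m)
    (step : ∀ k : ℕ, (∀ m : ℤ, -(dmax : ℤ) ≤ m → m ≤ (k : ℤ) → P m) → P ((k : ℤ) + 1)) :
    ∀ m : ℤ, -(dmax : ℤ) ≤ m → P m := by
  have H : ∀ k : ℕ, ∀ m : ℤ, -(dmax : ℤ) ≤ m → m ≤ (k : ℤ) → P m := by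
    intro k
    induction k with
    | zero => intro m h1 h2; exact base m h1 (by exact_mod_cast h2)
    | succ k ih =>
      intro m h1 h2
      rcases lt_or_eq_of_le h2 with h | h
      · exact ih m h1 (by omega)
      · have : m = (k : ℤ) + 1 := by omega
        rw [this]; exact step k ih
  intro m hm
  rcases le_or_gt m 0 with h | h
  · exact base m hm h
  · exact H m.toNat m hm (by omega)

set_option maxHeartbeats 1000000 in
/-- Corollary (discrete power-rate stability, degree-zero case, unbounded delays with
`sup_{k>T} d(k)/k = α < 1`): if `v > 0` satisfies `f(v) + g(v) < v` and for each `i`,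
`ξᵢ > 0` solves `fᵢ(v)/vᵢ + (1/(1-α))^{(rᵢ/rmax) ξᵢ} gᵢ(v)/vᵢ = 1`, then for every
`0 < ξ < minᵢ ξᵢ`, every solution from a nonnegative initial condition satisfies
`(xᵢ(k)/vᵢ)^{rmax/rᵢ} = O(k^{-ξ})` as `k → ∞`. -/
theorem discrete_homogeneous_nondecreasing_power_rate_stability
    (n : ℕ) (f g : (Fin n → ℝ) → Fin n → ℝ)
    (r : Fin n → ℝ) (hr : ∀ i, 0 < r i)
    (rmax : ℝ) (hrmax_ub : ∀ i, r i ≤ rmax) (hrmax_mem : ∃ i, r i = rmax)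
    (hf0 : f 0 = 0) (hg0 : g 0 = 0)
    (hfc : Continuous f) (hgc : Continuous g)
    (hfmono : NonDecOn n f) (hgmono : NonDecOn n g)
    (hfhom : Homogeneous n r 0 f) (hghom : Homogeneous n r 0 g)
    (d : ℕ → ℕ) (dmax : ℕ) (hd : DelayC d dmax)
    (T : ℕ) (α : ℝ) (hα0 : 0 ≤ α) (hα1 : α < 1)
    (hsup : IsLUB ((fun k : ℕ => (d k : ℝ) / (k : ℝ)) '' {k : ℕ | T < k}) α)
    (v : Fin n → ℝ) (hv : ∀ i, 0 < v i) (hfgv : ∀ i, f v i + g v i < v i)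
    (ξ : Fin n → ℝ) (hξpos : ∀ i, 0 < ξ i)
    (hξeq : ∀ i, f v i / v i +
        (1 / (1 - α)) ^ ((r i / rmax) * ξ i) * (g v i / v i) = 1) :
    ∀ ξ' : ℝ, 0 < ξ' → (∀ i, ξ' < ξ i) →
      ∀ φ x : ℤ → Fin n → ℝ, NonnegInitD n dmax φ → IsSolutionD n f g d dmax φ x →
        ∀ i, (fun k : ℕ => (x (k : ℤ) i / v i) ^ (rmax / r i)) =O[atTop]
          fun k : ℕ => (k : ℝ) ^ (-ξ') := by
  obtain ⟨i₀, hi₀⟩ := hrmax_mem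
  have hrmaxpos : 0 < rmax := hi₀ ▸ hr i₀
  intro ξ' hξ'pos hξ'lt φ x hφ hx i
  rcases eq_or_lt_of_le hα0 with hα | hαpos
  · exfalso
    have h1 := hξeq i
    rw [← hα] at h1
    norm_num [Real.one_rpow] at h1
    have hvi := hv i
    field_simp [hvi.ne'] at h1
    linarith [hfgv i]
  haveI : Nonempty (Fin n) := ⟨i₀⟩
  have hne : (Finset.univ : Finset (Fin n)).Nonempty := Finset.univ_nonempty
  set b : ℝ := 1 - α with hbdef
  have hb : 0 < b := by rw [hbdef]; linarith
  have hb1 : b < 1 := by rw [hbdef]; linarith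
  set ξm : ℝ := Finset.univ.inf' hne ξ with hξmdef
  have hξmle : ∀ j, ξm ≤ ξ j := fun j => Finset.inf'_le _ (Finset.mem_univ j)
  have hξ'ξm : ξ' < ξm := (Finset.lt_inf'_iff hne).2 fun j _ => hξ'lt j
  set σ : ℝ := (ξ' + ξm) / 2 with hσdef
  have hσ1 : ξ' < σ := by rw [hσdef]; linarith
  have hσ2 : ∀ j, σ < ξ j := fun j => by rw [hσdef]; have := hξmle j; linarith
  have hσpos : 0 < σ := by linarith
  have hfv0 : ∀ j, 0 ≤ f v j := by
    intro j
    have h := hfmono v 0 (fun l => le_rfl) (fun l => (hv l).le) j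
    rwa [hf0, Pi.zero_apply] at h
  have hgv0 : ∀ j, 0 ≤ g v j := by
    intro j
    have h := hgmono v 0 (fun l => le_rfl) (fun l => (hv l).le) j
    rwa [hg0, Pi.zero_apply] at h
  set c : Fin n → ℝ := fun j => b ^ (-(r j / rmax * ξ j)) with hcdef
  set t : Fin n → ℝ := fun j => b ^ (-(σ * (r j / rmax))) with htdef
  have hE : ∀ j, f v j + c j * g v j = v j := by
    intro j
    have h := hξeq j
    have hb' : (1 / b) ^ (r j / rmax * ξ j) = c j := by
      simp only [hcdef]
      rw [one_div, Real.inv_rpow hb.le, Real.rpow_neg hb.le]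
    rw [hb'] at h
    have hvne := (hv j).ne'
    have h2 : (f v j / v j + c j * (g v j / v j)) * v j = 1 * v j := by rw [h]
    rw [add_mul, div_mul_cancel₀ _ hvne, mul_assoc, div_mul_cancel₀ _ hvne, one_mul] at h2
    exact h2
  have hcpos : ∀ j, 0 < c j := fun j => Real.rpow_pos_of_pos hb _
  have htpos : ∀ j, 0 < t j := fun j => Real.rpow_pos_of_pos hb _
  have htc : ∀ j, t j < c j := by
    intro j
    simp only [hcdef, htdef]
    apply Real.rpow_lt_rpow_of_exponent_gt hb hb1
    have h1 : 0 < r j / rmax := div_pos (hr j) hrmaxpos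
    have h2 := mul_lt_mul_of_pos_left (hσ2 j) h1
    linarith
  have hgvpos : ∀ j, 0 < g v j := by
    intro j
    rcases lt_or_eq_of_le (hgv0 j) with h | h
    · exact h
    · exfalso
      have h1 := hE j
      rw [← h, mul_zero, add_zero] at h1
      have h2 := hfgv j
      have h3 : g v j = 0 := h.symm
      linarith
  have hfvle : ∀ j, f v j ≤ v j := by
    intro j
    have h1 := hE j
    have h2 : 0 ≤ c j * g v j := mul_nonneg (hcpos j).le (hgv0 j)
    linarith
  set ε : ℝ := Finset.univ.inf' hne (fun j => (c j - t j) * g v j / v j) with hεdef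
  have hεpos : 0 < ε := by
    rw [hεdef]
    apply (Finset.lt_inf'_iff hne).2
    intro j _
    exact div_pos (mul_pos (sub_pos.2 (htc j)) (hgvpos j)) (hv j)
  have hεle : ∀ j, ε ≤ (c j - t j) * g v j / v j := fun j => by
    rw [hεdef]; exact Finset.inf'_le _ (Finset.mem_univ j)
  set β : ℝ := b ^ (-(σ / ξ')) with hβdef
  have hβ1 : 1 < β := by
    rw [hβdef]
    apply Real.one_lt_rpow_of_pos_of_lt_one_of_neg hb hb1
    have h1 : 0 < σ / ξ' := div_pos hσpos hξ'pos
    linarith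
  have hβb : 1 < β * b := by
    have h1 : β * b = b ^ (-(σ / ξ') + 1) := by
      rw [hβdef, Real.rpow_add hb, Real.rpow_one]
    rw [h1]
    apply Real.one_lt_rpow_of_pos_of_lt_one_of_neg hb hb1
    have h2 : 1 < σ / ξ' := (one_lt_div hξ'pos).2 hσ1
    linarith
  have hρpos : 0 < (1 + ε) ^ (1 / ξ') - 1 := by
    have h1 : 1 < (1 + ε) ^ (1 / ξ') := by
      apply (Real.one_lt_rpow_iff_of_pos (by linarith)).2
      exact Or.inl ⟨by linarith, by positivity⟩
    linarith
  obtain ⟨K₀, hK₀⟩ := exists_nat_gt (1 / ((1 + ε) ^ (1 / ξ') - 1))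
  set K : ℕ := max K₀ 1 with hKdef
  have hK1 : (1 : ℝ) ≤ (K : ℝ) := by
    have h1 : (1 : ℕ) ≤ K := le_max_right _ _
    exact_mod_cast h1
  have hKpos : (0 : ℝ) < (K : ℝ) := by linarith
  have hKρ : 1 / (K : ℝ) ≤ (1 + ε) ^ (1 / ξ') - 1 := by
    have h1 : (K₀ : ℝ) ≤ (K : ℝ) := by exact_mod_cast le_max_left K₀ 1
    have h2 : 1 / ((1 + ε) ^ (1 / ξ') - 1) < (K : ℝ) := lt_of_lt_of_le hK₀ h1
    rw [div_lt_iff₀ hρpos] at h2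
    rw [div_le_iff₀ hKpos]
    linarith
  have hKε : (1 + 1 / (K : ℝ)) ^ ξ' ≤ 1 + ε := by
    have h1 : (1 + 1 / (K : ℝ)) ≤ (1 + ε) ^ (1 / ξ') := by linarith
    have h2 : (1 + 1 / (K : ℝ)) ^ ξ' ≤ ((1 + ε) ^ (1 / ξ')) ^ ξ' :=
      Real.rpow_le_rpow (by positivity) h1 hξ'pos.le
    rwa [← Real.rpow_mul (by linarith : (0:ℝ) ≤ 1 + ε), one_div_mul_cancel hξ'pos.ne',
      Real.rpow_one] at h2
  set N : ℕ := max (T + 1) ⌈1 / (β * b - 1)⌉₊ with hNdef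
  have hβbpos : 0 < β * b - 1 := by linarith
  have hNstep : ∀ k : ℕ, N ≤ k → ((k : ℝ) + 1 + K) ≤ β * (b * k + K) := by
    intro k hk
    have h1 : (1 : ℝ) / (β * b - 1) ≤ (⌈1 / (β * b - 1)⌉₊ : ℝ) := Nat.le_ceil _
    have h2 : (⌈1 / (β * b - 1)⌉₊ : ℝ) ≤ (k : ℝ) := by
      have h3 : ⌈1 / (β * b - 1)⌉₊ ≤ k := le_trans (le_max_right _ _) hk
      exact_mod_cast h3
    have h3 : 1 ≤ (k : ℝ) * (β * b - 1) := by
      rw [div_le_iff₀ hβbpos] at h1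
      exact le_trans h1 (mul_le_mul_of_nonneg_right h2 hβbpos.le)
    have h4 : 0 ≤ (K : ℝ) * (β - 1) := mul_nonneg (by linarith) (by linarith)
    have h5 : β * (b * k + K) = (k : ℝ) * (β * b - 1) + (K : ℝ) * (β - 1) + k + K := by ring
    rw [h5]
    linarith
  have hdk : ∀ k : ℕ, N ≤ k → (d k : ℝ) ≤ α * k ∧ (d k : ℤ) ≤ (k : ℤ) := by
    intro k hk
    have hTN : T + 1 ≤ N := le_max_left _ _
    have hTk : T < k := by omega
    have hkpos : (0 : ℝ) < (k : ℝ) := by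
      have h0 : 0 < k := by omega
      exact_mod_cast h0
    have hmem : (d k : ℝ) / (k : ℝ) ∈ ((fun k : ℕ => (d k : ℝ) / (k : ℝ)) '' {k : ℕ | T < k}) :=
      ⟨k, hTk, rfl⟩
    have h := hsup.1 hmem
    rw [div_le_iff₀ hkpos] at h
    refine ⟨h, ?_⟩
    have h2 : (d k : ℝ) ≤ (k : ℝ) := by
      have h3 := mul_le_mul_of_nonneg_right hα1.le hkpos.le
      linarith
    exact_mod_cast h2
  have hS0 : (0 : ℤ) ∈ Finset.Icc (-(dmax : ℤ)) 0 := Finset.mem_Icc.2 ⟨by omega, le_refl 0⟩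
  set M : ℝ := (Finset.Icc (-(dmax : ℤ)) 0).sup' ⟨0, hS0⟩ (fun m => ‖x m‖) with hMdef
  have hM0 : 0 ≤ M := le_trans (norm_nonneg (x 0)) (by rw [hMdef]; exact Finset.le_sup' (fun m => ‖x m‖) hS0)
  have hMb : ∀ m : ℤ, -(dmax : ℤ) ≤ m → m ≤ 0 → ∀ j, x m j ≤ M := by
    intro m h1 h2 j
    have h3 : ‖x m‖ ≤ M := by rw [hMdef]; exact Finset.le_sup' (fun m => ‖x m‖) (Finset.mem_Icc.2 ⟨h1, h2⟩)
    have h4 : |x m j| ≤ ‖x m‖ := by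
      have h5 := norm_le_pi_norm (x m) j
      simpa using h5
    linarith [le_abs_self (x m j)]
  set rmin : ℝ := Finset.univ.inf' hne r with hrmindef
  have hrminpos : 0 < rmin := by
    rw [hrmindef]; exact (Finset.lt_inf'_iff hne).2 fun j _ => hr j
  have hrminle : ∀ j, rmin ≤ r j := fun j => by
    rw [hrmindef]; exact Finset.inf'_le _ (Finset.mem_univ j)
  set vmin : ℝ := Finset.univ.inf' hne v with hvmindef
  have hvminpos : 0 < vmin := by
    rw [hvmindef]; exact (Finset.lt_inf'_iff hne).2 fun j _ => hv j
  have hvminle : ∀ j, vmin ≤ v j := fun j => by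
    rw [hvmindef]; exact Finset.inf'_le _ (Finset.mem_univ j)
  set lam0 : ℝ := (M / vmin + 1) ^ (1 / rmin) with hlam0def
  have hlam0_1 : (1 : ℝ) ≤ lam0 := by
    rw [hlam0def]
    have h1 : (1 : ℝ) ≤ M / vmin + 1 := by
      have h2 := div_nonneg hM0 hvminpos.le; linarith
    calc (1 : ℝ) = 1 ^ (1 / rmin) := (Real.one_rpow _).symm
    _ ≤ (M / vmin + 1) ^ (1 / rmin) := Real.rpow_le_rpow (by norm_num) h1 (by positivity)
  have hlam0pos : 0 < lam0 := lt_of_lt_of_le one_pos hlam0_1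
  have hlam0M : ∀ j, M ≤ lam0 ^ r j * v j := by
    intro j
    have h1 : lam0 ^ rmin = M / vmin + 1 := by
      rw [hlam0def, ← Real.rpow_mul (by positivity), one_div_mul_cancel hrminpos.ne',
        Real.rpow_one]
    have h2 : lam0 ^ rmin ≤ lam0 ^ r j := Real.rpow_le_rpow_of_exponent_le hlam0_1 (hrminle j)
    have h3 : M / vmin * vmin = M := div_mul_cancel₀ _ hvminpos.ne'
    have h5 : 0 ≤ M / vmin := div_nonneg hM0 hvminpos.le
    have h6 : lam0 ^ rmin * v j = M / vmin * v j + v j := by rw [h1]; ring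
    have h7 := mul_le_mul_of_nonneg_right h2 (hv j).le
    have h8 := mul_le_mul_of_nonneg_left (hvminle j) h5
    rw [h3] at h8
    linarith [(hv j).le]
  have hbnd : ∀ m : ℤ, -(dmax : ℤ) ≤ m →
      (∀ j, 0 ≤ x m j) ∧ ∀ j, x m j ≤ lam0 ^ r j * v j := by
    apply hist_ind dmax (fun m => (∀ j, 0 ≤ x m j) ∧ ∀ j, x m j ≤ lam0 ^ r j * v j)
    · intro m h1 h2
      constructor
      · intro j; rw [hx.1 m h1 h2]; exact hφ m h1 h2 j
      · intro j; exact (hMb m h1 h2 j).trans (hlam0M j)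
    · intro k ih
      have hk0 : -(dmax : ℤ) ≤ (k : ℤ) := by omega
      have ihk := ih (k : ℤ) hk0 le_rfl
      have ihd := ih ((k : ℤ) - (d k : ℤ)) (hd.2 k) (by omega)
      rw [hx.2 k]
      constructor
      · intro j
        have h1 := hfmono (x (k : ℤ)) 0 (fun _ => le_rfl) ihk.1 j
        have h2 := hgmono (x ((k : ℤ) - (d k : ℤ))) 0 (fun _ => le_rfl) ihd.1 j
        rw [hf0, Pi.zero_apply] at h1
        rw [hg0, Pi.zero_apply] at h2
        have h6 : (f (x (k : ℤ)) + g (x ((k : ℤ) - (d k : ℤ)))) j =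
            f (x (k : ℤ)) j + g (x ((k : ℤ) - (d k : ℤ))) j := rfl
        rw [h6]
        linarith
      · intro j
        have h1 := hfmono (fun l => lam0 ^ r l * v l) (x (k : ℤ)) ihk.1 ihk.2 j
        have h2 := hgmono (fun l => lam0 ^ r l * v l) (x ((k : ℤ) - (d k : ℤ))) ihd.1 ihd.2 j
        have h3 := congrFun (hfhom v lam0 hlam0pos) j
        have h4 := congrFun (hghom v lam0 hlam0pos) j
        simp only [Real.rpow_zero, one_mul] at h3 h4
        rw [h3] at h1
        rw [h4] at h2
        have h5 : 0 ≤ lam0 ^ r j := (Real.rpow_pos_of_pos hlam0pos _).le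
        have h6 : (f (x (k : ℤ)) + g (x ((k : ℤ) - (d k : ℤ)))) j =
            f (x (k : ℤ)) j + g (x ((k : ℤ) - (d k : ℤ))) j := rfl
        rw [h6]
        have h7 := mul_le_mul_of_nonneg_left (hfgv j).le h5
        linarith [h1, h2, h7]
  set eta : ℤ → ℝ := fun m => ((K : ℝ) / (((max m 0 : ℤ) : ℝ) + (K : ℝ))) ^ (ξ' / rmax)
    with hetadef
  have hD0 : ∀ m : ℤ, (0 : ℝ) ≤ ((max m 0 : ℤ) : ℝ) := by
    intro m; exact_mod_cast le_max_right m 0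
  have hDpos : ∀ m : ℤ, (0 : ℝ) < ((max m 0 : ℤ) : ℝ) + K := fun m => by linarith [hD0 m]
  have hetapos : ∀ m, 0 < eta m := fun m => by
    rw [hetadef]
    exact Real.rpow_pos_of_pos (div_pos hKpos (hDpos m)) _
  have hetamono : ∀ m m' : ℤ, m ≤ m' → eta m' ≤ eta m := by
    intro m m' h
    rw [hetadef]
    apply Real.rpow_le_rpow (div_nonneg hKpos.le (hDpos m').le) ?_ (by positivity)
    have h1 : (max m 0) ≤ (max m' 0) := by omega
    have h2 : ((max m 0 : ℤ) : ℝ) ≤ ((max m' 0 : ℤ) : ℝ) := by exact_mod_cast h1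
    exact div_le_div_of_nonneg_left hKpos.le (hDpos m) (by linarith)
  have hetanat : ∀ k : ℕ, eta (k : ℤ) = ((K : ℝ) / ((k : ℝ) + (K : ℝ))) ^ (ξ' / rmax) := by
    intro k
    rw [hetadef]
    have h1 : max (k : ℤ) 0 = (k : ℤ) := max_eq_left (Int.natCast_nonneg k)
    simp only [h1, Int.cast_natCast]
  set lam : ℝ := lam0 * (((N : ℝ) + K) / K) ^ (ξ' / rmax) with hlamdef
  have hN0 : (0 : ℝ) ≤ (N : ℝ) := Nat.cast_nonneg N
  have hNK : (0 : ℝ) < (N : ℝ) + K := by linarith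
  have hlampos : 0 < lam := by
    rw [hlamdef]
    exact mul_pos hlam0pos (Real.rpow_pos_of_pos (div_pos hNK hKpos) _)
  have hlamN : lam * eta (N : ℤ) = lam0 := by
    rw [hetanat N, hlamdef]
    have hKne : (K : ℝ) ≠ 0 := hKpos.ne'
    have hNKne : (N : ℝ) + K ≠ 0 := hNK.ne'
    have h2 : ((N : ℝ) + K) / K * ((K : ℝ) / ((N : ℝ) + K)) = 1 := by field_simp
    rw [mul_assoc, ← Real.mul_rpow (div_nonneg hNK.le hKpos.le) (div_nonneg hKpos.le hNK.le),
      h2, Real.one_rpow, mul_one]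
  have hbase2 : ∀ m : ℤ, -(dmax : ℤ) ≤ m → m ≤ (N : ℤ) → ∀ j,
      x m j ≤ (lam * eta m) ^ r j * v j := by
    intro m h1 h2 j
    have hx1 := (hbnd m h1).2 j
    have h3 : lam0 ≤ lam * eta m := by
      rw [← hlamN]
      exact mul_le_mul_of_nonneg_left (hetamono m (N : ℤ) h2) hlampos.le
    have h4 : lam0 ^ r j ≤ (lam * eta m) ^ r j :=
      Real.rpow_le_rpow hlam0pos.le h3 (hr j).le
    exact hx1.trans (mul_le_mul_of_nonneg_right h4 (hv j).le)
  have hcore : ∀ k : ℕ, N ≤ k → ∀ j,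
      (lam * eta (k : ℤ)) ^ r j * f v j +
        (lam * eta ((k : ℤ) - (d k : ℤ))) ^ r j * g v j ≤
        (lam * eta ((k : ℤ) + 1)) ^ r j * v j := by
    intro k hk j
    obtain ⟨hdkr, hdki⟩ := hdk k hk
    have hkR : (0 : ℝ) ≤ (k : ℝ) := Nat.cast_nonneg k
    have hApos : (0 : ℝ) < (k : ℝ) + K := by linarith
    have hBpos : (0 : ℝ) < (k : ℝ) + 1 + K := by linarith
    have hCb : b * (k : ℝ) + K ≤ (k : ℝ) - (d k : ℝ) + K := by
      rw [hbdef]; linarith [hdkr]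
    have hCpos : (0 : ℝ) < (k : ℝ) - (d k : ℝ) + K := by
      have h9 := mul_nonneg hb.le hkR
      linarith [hCb]
    have hmaxd : max ((k : ℤ) - (d k : ℤ)) 0 = (k : ℤ) - (d k : ℤ) := max_eq_left (by omega)
    have hmax1 : max ((k : ℤ) + 1) 0 = (k : ℤ) + 1 := max_eq_left (by omega)
    have hetad : eta ((k : ℤ) - (d k : ℤ)) =
        ((K : ℝ) / ((k : ℝ) - (d k : ℝ) + (K : ℝ))) ^ (ξ' / rmax) := by
      rw [hetadef]
      simp only [hmaxd]
      congr 1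
      push_cast
      ring
    have heta1' : eta ((k : ℤ) + 1) = ((K : ℝ) / ((k : ℝ) + 1 + (K : ℝ))) ^ (ξ' / rmax) := by
      rw [hetadef]
      simp only [hmax1]
      congr 1
      push_cast
      ring
    set e : ℝ := ξ' / rmax * r j with hedef
    have hepos : 0 < e := mul_pos (div_pos hξ'pos hrmaxpos) (hr j)
    have heξ : e ≤ ξ' := by
      rw [hedef, div_mul_eq_mul_div, div_le_iff₀ hrmaxpos]
      exact mul_le_mul_of_nonneg_left (hrmax_ub j) hξ'pos.le
    have hpowmul : ∀ z : ℝ, 0 ≤ z → (z ^ (ξ' / rmax)) ^ r j = z ^ e := by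
      intro z hz
      rw [hedef]
      exact (Real.rpow_mul hz _ _).symm
    have hsplit : ∀ m : ℤ, (lam * eta m) ^ r j = lam ^ r j * (eta m) ^ r j := fun m =>
      Real.mul_rpow hlampos.le (hetapos m).le
    rw [hsplit, hsplit, hsplit, hetanat k, hetad, heta1',
      hpowmul _ (div_nonneg hKpos.le hApos.le),
      hpowmul _ (div_nonneg hKpos.le hCpos.le),
      hpowmul _ (div_nonneg hKpos.le hBpos.le)]
    have key : ((K : ℝ) / ((k : ℝ) + (K : ℝ))) ^ e * f v j +
        ((K : ℝ) / ((k : ℝ) - (d k : ℝ) + (K : ℝ))) ^ e * g v j ≤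
        ((K : ℝ) / ((k : ℝ) + 1 + (K : ℝ))) ^ e * v j := by
      have hsA : ((K : ℝ) / ((k : ℝ) + (K : ℝ))) ^ e =
          ((K : ℝ) / ((k : ℝ) + 1 + (K : ℝ))) ^ e *
            (((k : ℝ) + 1 + (K : ℝ)) / ((k : ℝ) + (K : ℝ))) ^ e := by
        rw [← Real.mul_rpow (div_nonneg hKpos.le hBpos.le) (div_nonneg hBpos.le hApos.le)]
        congr 1
        field_simp
      have hsC : ((K : ℝ) / ((k : ℝ) - (d k : ℝ) + (K : ℝ))) ^ e =
          ((K : ℝ) / ((k : ℝ) + 1 + (K : ℝ))) ^ e *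
            (((k : ℝ) + 1 + (K : ℝ)) / ((k : ℝ) - (d k : ℝ) + (K : ℝ))) ^ e := by
        rw [← Real.mul_rpow (div_nonneg hKpos.le hBpos.le) (div_nonneg hBpos.le hCpos.le)]
        congr 1
        field_simp
      have hBA : (((k : ℝ) + 1 + (K : ℝ)) / ((k : ℝ) + (K : ℝ))) ^ e ≤ 1 + ε := by
        have h1 : ((k : ℝ) + 1 + (K : ℝ)) / ((k : ℝ) + (K : ℝ)) ≤ 1 + 1 / (K : ℝ) := by
          rw [div_le_iff₀ hApos]
          have h3 : 1 ≤ ((k : ℝ) + K) / K := (one_le_div hKpos).2 (by linarith)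
          have h4 : (1 + 1 / (K : ℝ)) * ((k : ℝ) + K) = ((k : ℝ) + K) / K + (k : ℝ) + K := by
            field_simp
            ring
          rw [h4]
          linarith
        have h1' : (1 : ℝ) ≤ 1 + 1 / (K : ℝ) := by
          have := one_div_pos.2 hKpos; linarith
        calc (((k : ℝ) + 1 + (K : ℝ)) / ((k : ℝ) + (K : ℝ))) ^ e ≤ (1 + 1 / (K : ℝ)) ^ e :=
              Real.rpow_le_rpow (div_nonneg hBpos.le hApos.le) h1 hepos.le
          _ ≤ (1 + 1 / (K : ℝ)) ^ ξ' := Real.rpow_le_rpow_of_exponent_le h1' heξ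
          _ ≤ 1 + ε := hKε
      have hBC : (((k : ℝ) + 1 + (K : ℝ)) / ((k : ℝ) - (d k : ℝ) + (K : ℝ))) ^ e ≤ t j := by
        have h0 : (k : ℝ) + 1 + (K : ℝ) ≤ β * ((k : ℝ) - (d k : ℝ) + (K : ℝ)) := by
          have h1 := hNstep k hk
          have h2 : β * (b * (k : ℝ) + K) ≤ β * ((k : ℝ) - (d k : ℝ) + K) :=
            mul_le_mul_of_nonneg_left hCb (by linarith)
          linarith
        have h2 : ((k : ℝ) + 1 + (K : ℝ)) / ((k : ℝ) - (d k : ℝ) + (K : ℝ)) ≤ β :=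
          (div_le_iff₀ hCpos).2 (by linarith)
        have h3 : (((k : ℝ) + 1 + (K : ℝ)) / ((k : ℝ) - (d k : ℝ) + (K : ℝ))) ^ e ≤ β ^ e :=
          Real.rpow_le_rpow (div_nonneg hBpos.le hCpos.le) h2 hepos.le
        have h4 : β ^ e = t j := by
          rw [hβdef, ← Real.rpow_mul hb.le]
          simp only [htdef]
          congr 1
          rw [hedef]
          field_simp
        rw [h4] at h3
        exact h3
      have hmain : (1 + ε) * f v j + t j * g v j ≤ v j := by
        have h1 := hE j
        have h2 := hεle j
        have h3 : ε * v j ≤ (c j - t j) * g v j := by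
          rw [le_div_iff₀ (hv j)] at h2; linarith
        have h4 : ε * f v j ≤ ε * v j := mul_le_mul_of_nonneg_left (hfvle j) hεpos.le
        have h5 : (c j - t j) * g v j = c j * g v j - t j * g v j := by ring
        have h6 : (1 + ε) * f v j = f v j + ε * f v j := by ring
        linarith
      rw [hsA, hsC]
      have h5 : (((k : ℝ) + 1 + (K : ℝ)) / ((k : ℝ) + (K : ℝ))) ^ e * f v j +
          (((k : ℝ) + 1 + (K : ℝ)) / ((k : ℝ) - (d k : ℝ) + (K : ℝ))) ^ e * g v j ≤
          (1 + ε) * f v j + t j * g v j :=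
        add_le_add (mul_le_mul_of_nonneg_right hBA (hfv0 j))
          (mul_le_mul_of_nonneg_right hBC (hgv0 j))
      have h6 : 0 ≤ ((K : ℝ) / ((k : ℝ) + 1 + (K : ℝ))) ^ e :=
        Real.rpow_nonneg (div_nonneg hKpos.le hBpos.le) _
      calc ((K : ℝ) / ((k : ℝ) + 1 + (K : ℝ))) ^ e *
              (((k : ℝ) + 1 + (K : ℝ)) / ((k : ℝ) + (K : ℝ))) ^ e * f v j +
            ((K : ℝ) / ((k : ℝ) + 1 + (K : ℝ))) ^ e *
              (((k : ℝ) + 1 + (K : ℝ)) / ((k : ℝ) - (d k : ℝ) + (K : ℝ))) ^ e * g v j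
          = ((K : ℝ) / ((k : ℝ) + 1 + (K : ℝ))) ^ e *
              ((((k : ℝ) + 1 + (K : ℝ)) / ((k : ℝ) + (K : ℝ))) ^ e * f v j +
                (((k : ℝ) + 1 + (K : ℝ)) / ((k : ℝ) - (d k : ℝ) + (K : ℝ))) ^ e * g v j) := by
            ring
        _ ≤ ((K : ℝ) / ((k : ℝ) + 1 + (K : ℝ))) ^ e * ((1 + ε) * f v j + t j * g v j) :=
            mul_le_mul_of_nonneg_left h5 h6
        _ ≤ ((K : ℝ) / ((k : ℝ) + 1 + (K : ℝ))) ^ e * v j :=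
            mul_le_mul_of_nonneg_left hmain h6
    have h7 : 0 ≤ lam ^ r j := (Real.rpow_pos_of_pos hlampos _).le
    calc lam ^ r j * ((K : ℝ) / ((k : ℝ) + (K : ℝ))) ^ e * f v j +
          lam ^ r j * ((K : ℝ) / ((k : ℝ) - (d k : ℝ) + (K : ℝ))) ^ e * g v j
        = lam ^ r j * (((K : ℝ) / ((k : ℝ) + (K : ℝ))) ^ e * f v j +
            ((K : ℝ) / ((k : ℝ) - (d k : ℝ) + (K : ℝ))) ^ e * g v j) := by ring
      _ ≤ lam ^ r j * (((K : ℝ) / ((k : ℝ) + 1 + (K : ℝ))) ^ e * v j) :=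
          mul_le_mul_of_nonneg_left key h7
      _ = lam ^ r j * ((K : ℝ) / ((k : ℝ) + 1 + (K : ℝ))) ^ e * v j := by ring
  have hdec : ∀ m : ℤ, -(dmax : ℤ) ≤ m → ∀ j, x m j ≤ (lam * eta m) ^ r j * v j := by
    apply hist_ind dmax (fun m => ∀ j, x m j ≤ (lam * eta m) ^ r j * v j)
    · intro m h1 h2
      exact hbase2 m h1 (le_trans h2 (Int.natCast_nonneg N))
    · intro k ih
      rcases le_or_gt ((k : ℤ) + 1) (N : ℤ) with hcase | hcase
      · exact hbase2 ((k : ℤ) + 1) (by omega) hcase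
      · have hkN : N ≤ k := by omega
        intro j
        have hk0 : -(dmax : ℤ) ≤ (k : ℤ) := by omega
        have ihk := ih (k : ℤ) hk0 le_rfl
        have ihd := ih ((k : ℤ) - (d k : ℤ)) (hd.2 k) (by omega)
        have hxk := hbnd (k : ℤ) hk0
        have hxd := hbnd ((k : ℤ) - (d k : ℤ)) (hd.2 k)
        rw [hx.2 k]
        have hp1 : 0 < lam * eta (k : ℤ) := mul_pos hlampos (hetapos _)
        have hp2 : 0 < lam * eta ((k : ℤ) - (d k : ℤ)) := mul_pos hlampos (hetapos _)
        have h1 := hfmono (fun l => (lam * eta (k : ℤ)) ^ r l * v l) (x (k : ℤ)) hxk.1 ihk j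
        have h2 := hgmono (fun l => (lam * eta ((k : ℤ) - (d k : ℤ))) ^ r l * v l)
          (x ((k : ℤ) - (d k : ℤ))) hxd.1 ihd j
        have h3 := congrFun (hfhom v (lam * eta (k : ℤ)) hp1) j
        have h4 := congrFun (hghom v (lam * eta ((k : ℤ) - (d k : ℤ))) hp2) j
        simp only [Real.rpow_zero, one_mul] at h3 h4
        rw [h3] at h1
        rw [h4] at h2
        have h5 := hcore k hkN j
        have h6 : (f (x (k : ℤ)) + g (x ((k : ℤ) - (d k : ℤ)))) j =
            f (x (k : ℤ)) j + g (x ((k : ℤ) - (d k : ℤ))) j := rfl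
        rw [h6]
        linarith
  rw [Asymptotics.isBigO_iff]
  refine ⟨lam ^ rmax * (K : ℝ) ^ ξ', ?_⟩
  filter_upwards [Filter.eventually_ge_atTop 1] with k hk1
  have hk1R : (1 : ℝ) ≤ (k : ℝ) := by exact_mod_cast hk1
  have hkpos : (0 : ℝ) < (k : ℝ) := by linarith
  have hk0 : -(dmax : ℤ) ≤ (k : ℤ) := by omega
  have hxk := hbnd (k : ℤ) hk0
  have hxv : 0 ≤ x (k : ℤ) i / v i := div_nonneg (hxk.1 i) (hv i).le
  have hp : 0 < lam * eta (k : ℤ) := mul_pos hlampos (hetapos _)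
  have h1 : x (k : ℤ) i / v i ≤ (lam * eta (k : ℤ)) ^ r i := by
    rw [div_le_iff₀ (hv i)]
    exact hdec (k : ℤ) hk0 i
  have h2 : (x (k : ℤ) i / v i) ^ (rmax / r i) ≤
      ((lam * eta (k : ℤ)) ^ r i) ^ (rmax / r i) :=
    Real.rpow_le_rpow hxv h1 (div_pos hrmaxpos (hr i)).le
  have h3 : ((lam * eta (k : ℤ)) ^ r i) ^ (rmax / r i) = (lam * eta (k : ℤ)) ^ rmax := by
    rw [← Real.rpow_mul hp.le]
    congr 1
    field_simp
    rw [div_self (hr i).ne']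
  have hkK : (0 : ℝ) ≤ (k : ℝ) + K := by linarith
  have h4 : (lam * eta (k : ℤ)) ^ rmax = lam ^ rmax * ((K : ℝ) / ((k : ℝ) + K)) ^ ξ' := by
    rw [Real.mul_rpow hlampos.le (hetapos _).le, hetanat k,
      ← Real.rpow_mul (div_nonneg hKpos.le hkK), div_mul_cancel₀ _ hrmaxpos.ne']
  have h5 : ((K : ℝ) / ((k : ℝ) + K)) ^ ξ' ≤ (K : ℝ) ^ ξ' * (k : ℝ) ^ (-ξ') := by
    rw [Real.div_rpow hKpos.le hkK, Real.rpow_neg hkpos.le, ← div_eq_mul_inv]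
    exact div_le_div_of_nonneg_left (Real.rpow_nonneg hKpos.le _)
      (Real.rpow_pos_of_pos hkpos _)
      (Real.rpow_le_rpow hkpos.le (by linarith) hξ'pos.le)
  have h6 : 0 ≤ (k : ℝ) ^ (-ξ') := Real.rpow_nonneg hkpos.le _
  have h7 : 0 ≤ lam ^ rmax := (Real.rpow_pos_of_pos hlampos _).le
  rw [Real.norm_eq_abs, Real.norm_eq_abs, abs_of_nonneg (Real.rpow_nonneg hxv _),
    abs_of_nonneg h6]
  calc (x (k : ℤ) i / v i) ^ (rmax / r i) ≤ (lam * eta (k : ℤ)) ^ rmax := h3 ▸ h2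
    _ = lam ^ rmax * ((K : ℝ) / ((k : ℝ) + K)) ^ ξ' := h4
    _ ≤ lam ^ rmax * ((K : ℝ) ^ ξ' * (k : ℝ) ^ (-ξ')) := mul_le_mul_of_nonneg_left h5 h7
    _ = lam ^ rmax * (K : ℝ) ^ ξ' * (k : ℝ) ^ (-ξ') := by ring
end

section
/- Let A, B ∈ ℝ^{n×n} be nonnegative matrices and consider the discrete-time delayed linear system Σ_L: x(k+1) = A x(k) + B x(k−d(k)) for k ∈ ℕ_0, with x(k) = φ(k) for k ∈ {−d_max,…,0}. Then there exists a vector v > 0 such that (A + B)v < v (componentwise) if and only if Σ_L is globally asymptotically stable for every nonnegative initial condition and for every delay d satisfying Assumption C. -/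
open Real Filter Set Asymptotics

private lemma mulVec_nn {n : ℕ} (A : Matrix (Fin n) (Fin n) ℝ) (hA : ∀ i j, 0 ≤ A i j)
    (x : Fin n → ℝ) (hx : ∀ i, 0 ≤ x i) (i : Fin n) : 0 ≤ A.mulVec x i := by
  simp only [Matrix.mulVec, dotProduct]
  exact Finset.sum_nonneg fun j _ => mul_nonneg (hA i j) (hx j)

private lemma mulVec_mono {n : ℕ} (A : Matrix (Fin n) (Fin n) ℝ) (hA : ∀ i j, 0 ≤ A i j)
    {x y : Fin n → ℝ} (hxy : ∀ j, x j ≤ y j) (i : Fin n) : A.mulVec x i ≤ A.mulVec y i := by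
  simp only [Matrix.mulVec, dotProduct]
  exact Finset.sum_le_sum fun j _ => mul_le_mul_of_nonneg_left (hxy j) (hA i j)

private lemma step_bound {n : ℕ} (A B : Matrix (Fin n) (Fin n) ℝ)
    (hA : ∀ i j, 0 ≤ A i j) (hB : ∀ i j, 0 ≤ B i j)
    (v : Fin n → ℝ) (t : ℝ) (x y : Fin n → ℝ)
    (hx : ∀ i, x i ≤ t * v i) (hy : ∀ i, y i ≤ t * v i) (i : Fin n) :
    A.mulVec x i + B.mulVec y i ≤ t * (A + B).mulVec v i := by
  have h1 : A.mulVec x i ≤ A.mulVec (t • v) i :=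
    mulVec_mono A hA (fun j => by simpa [smul_eq_mul] using hx j) i
  have h2 : B.mulVec y i ≤ B.mulVec (t • v) i :=
    mulVec_mono B hB (fun j => by simpa [smul_eq_mul] using hy j) i
  have e1 : A.mulVec (t • v) i = t * A.mulVec v i := by rw [Matrix.mulVec_smul]; simp
  have e2 : B.mulVec (t • v) i = t * B.mulVec v i := by rw [Matrix.mulVec_smul]; simp
  have e3 : (A + B).mulVec v i = A.mulVec v i + B.mulVec v i := by
    rw [Matrix.add_mulVec]; simp
  rw [e3]; rw [e1] at h1; rw [e2] at h2; linarith

private lemma pow_nn {n : ℕ} (M : Matrix (Fin n) (Fin n) ℝ) (hM : ∀ i j, 0 ≤ M i j) :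
    ∀ m : ℕ, ∀ i j, 0 ≤ (M ^ m) i j := by
  intro m
  induction m with
  | zero => intro i j; simp [Matrix.one_apply]; split <;> norm_num
  | succ m ih =>
      intro i j
      rw [pow_succ, Matrix.mul_apply]
      exact Finset.sum_nonneg fun k _ => mul_nonneg (ih i k) (hM k j)

private lemma comp_le_norm {n : ℕ} (x : Fin n → ℝ) (i : Fin n) : x i ≤ ‖x‖ :=
  le_trans (le_abs_self _) (by rw [← Real.norm_eq_abs]; exact norm_le_pi_norm x i)

private lemma sol_nonneg_bound {n : ℕ} (A B : Matrix (Fin n) (Fin n) ℝ)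
    (hA : ∀ i j, 0 ≤ A i j) (hB : ∀ i j, 0 ≤ B i j)
    (d : ℕ → ℕ) (dmax : ℕ) (hd2 : ∀ k : ℕ, -(dmax : ℤ) ≤ (k : ℤ) - (d k : ℤ))
    (v : Fin n → ℝ) (hMv : ∀ i, (A + B).mulVec v i ≤ v i)
    (φ x : ℤ → Fin n → ℝ) (hφ : NonnegInitD n dmax φ)
    (hx : IsSolutionD n (fun y => A.mulVec y) (fun y => B.mulVec y) d dmax φ x)
    (c : ℝ) (hc : 0 ≤ c)
    (hinit : ∀ k : ℤ, -(dmax : ℤ) ≤ k → k ≤ 0 → ∀ i, φ k i ≤ c * v i) :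
    ∀ k : ℤ, -(dmax : ℤ) ≤ k → ∀ i, 0 ≤ x k i ∧ x k i ≤ c * v i := by
  have key : ∀ N : ℕ, ∀ k : ℤ, -(dmax : ℤ) ≤ k → k ≤ (N : ℤ) →
      ∀ i, 0 ≤ x k i ∧ x k i ≤ c * v i := by
    intro N
    induction N with
    | zero =>
        intro k hk1 hk2 i
        rw [hx.1 k hk1 (by exact_mod_cast hk2)]
        exact ⟨hφ k hk1 (by exact_mod_cast hk2) i, hinit k hk1 (by exact_mod_cast hk2) i⟩
    | succ N ih =>
        intro k hk1 hk2 i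
        by_cases hkN : k ≤ (N : ℤ)
        · exact ih k hk1 hkN i
        · have hkeq : k = (N : ℤ) + 1 := by push_cast at hk2 ⊢; omega
          subst hkeq
          have hrec := hx.2 N
          have h1 := ih (N : ℤ) (by omega) le_rfl
          have h2 := ih ((N : ℤ) - (d N : ℤ)) (hd2 N) (by omega)
          simp only [hrec, Pi.add_apply]
          refine ⟨add_nonneg (mulVec_nn A hA _ (fun j => (h1 j).1) i)
            (mulVec_nn B hB _ (fun j => (h2 j).1) i), ?_⟩
          calc A.mulVec (x (N : ℤ)) i + B.mulVec (x ((N : ℤ) - (d N : ℤ))) i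
              ≤ c * (A + B).mulVec v i :=
                step_bound A B hA hB v c _ _ (fun j => (h1 j).2) (fun j => (h2 j).2) i
            _ ≤ c * v i := mul_le_mul_of_nonneg_left (hMv i) hc
  intro k hk i
  exact key (max k 0).toNat k hk (by omega) i


/-- Corollary (discrete-time positive linear systems): for nonnegative matrices `A` and `B`,
there exists `v > 0` with `(A+B)v < v` if and only if the delayed linear system
`x(k+1) = A x(k) + B x(k-d(k))` is globally asymptotically stable for every delay satisfying
Assumption C. -/
theorem discrete_positive_linear_delay_independent_stability
    (n : ℕ) (A B : Matrix (Fin n) (Fin n) ℝ)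
    (hA : ∀ i j, 0 ≤ A i j) (hB : ∀ i j, 0 ≤ B i j) :
    (∃ v : Fin n → ℝ, (∀ i, 0 < v i) ∧ ∀ i, (A + B).mulVec v i < v i) ↔
      ∀ d : ℕ → ℕ, ∀ dmax : ℕ, DelayC d dmax →
        GASD n (fun x => A.mulVec x) (fun x => B.mulVec x) d dmax := by
  constructor
  · rintro ⟨v, hv, hMvlt⟩ d dmax hd
    rcases Nat.eq_zero_or_pos n with hn | hn
    · subst hn
      have hzero : ∀ y : Fin 0 → ℝ, y = 0 := fun y => Subsingleton.elim _ _
      constructor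
      · intro ε hε
        refine ⟨1, one_pos, fun φ x _ _ _ k => ?_⟩
        rw [hzero (x (k : ℤ)), norm_zero]; exact hε
      · intro φ x _ _
        have he : (fun k : ℕ => x (k : ℤ)) = fun _ => 0 := funext fun k => hzero _
        rw [he]; exact tendsto_const_nhds
    · have hnE : Nonempty (Fin n) := Fin.pos_iff_nonempty.1 hn
      have hne : (Finset.univ : Finset (Fin n)).Nonempty := Finset.univ_nonempty
      have i0 : Fin n := ⟨0, hn⟩
      have hMnn : ∀ i j, 0 ≤ (A + B) i j := fun i j => add_nonneg (hA i j) (hB i j)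
      set m := Finset.univ.inf' hne v with hmdef
      set V := Finset.univ.sup' hne v with hVdef
      have hm : 0 < m := by rw [hmdef]; exact (Finset.lt_inf'_iff hne).2 fun i _ => hv i
      have hmle : ∀ i, m ≤ v i := fun i => Finset.inf'_le v (Finset.mem_univ i)
      have hleV : ∀ i, v i ≤ V := fun i => Finset.le_sup' v (Finset.mem_univ i)
      have hV : 0 < V := lt_of_lt_of_le hm (le_trans (hmle i0) (hleV i0))
      set μ := Finset.univ.sup' hne (fun i => (A + B).mulVec v i / v i) with hμdef
      have hμlt : μ < 1 := (Finset.sup'_lt_iff hne).2 fun i _ => (div_lt_one (hv i)).2 (hMvlt i)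
      have hsup : ∀ i, (A + B).mulVec v i / v i ≤ μ := by
        intro i
        rw [hμdef]
        exact Finset.le_sup' (fun i => (A + B).mulVec v i / v i) (Finset.mem_univ i)
      have hμ0 : 0 ≤ μ :=
        le_trans (div_nonneg (mulVec_nn (A + B) hMnn v (fun i => (hv i).le) i0) (hv i0).le)
          (hsup i0)
      have hMμ : ∀ i, (A + B).mulVec v i ≤ μ * v i := fun i =>
        (div_le_iff₀ (hv i)).1 (hsup i)
      have hMvle : ∀ i, (A + B).mulVec v i ≤ v i := fun i => (hMvlt i).le
      constructor
      · -- Lyapunov stability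
        intro ε hε
        set δ := ε * m / (2 * V) with hδdef
        refine ⟨δ, by positivity, fun φ x hφ hsol hφδ k => ?_⟩
        have hc : (0 : ℝ) ≤ δ / m := by positivity
        have hinit : ∀ j : ℤ, -(dmax : ℤ) ≤ j → j ≤ 0 → ∀ i, φ j i ≤ δ / m * v i := by
          intro j hj1 hj2 i
          have h1 : φ j i ≤ ‖φ j‖ := comp_le_norm _ i
          have h2 : ‖φ j‖ < δ := hφδ j hj1 hj2
          have h3 : δ ≤ δ / m * v i := by
            calc δ = δ / m * m := (div_mul_cancel₀ δ hm.ne').symm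
              _ ≤ δ / m * v i := mul_le_mul_of_nonneg_left (hmle i) hc
          linarith
        have hbound := sol_nonneg_bound A B hA hB d dmax hd.2 v hMvle φ x hφ hsol (δ / m) hc hinit
        refine (pi_norm_lt_iff hε).2 fun i => ?_
        have h := hbound (k : ℤ) (by omega) i
        rw [Real.norm_eq_abs, abs_of_nonneg h.1]
        have hhalf : δ / m * V = ε / 2 := by
          rw [hδdef]; field_simp
        calc x (k : ℤ) i ≤ δ / m * v i := h.2
          _ ≤ δ / m * V := mul_le_mul_of_nonneg_left (hleV i) hc
          _ < ε := by rw [hhalf]; linarith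
      · -- attractivity
        intro φ x hφ hsol
        have hicc : ((0:ℤ) ∈ Finset.Icc (-(dmax : ℤ)) 0) := Finset.mem_Icc.2 ⟨by omega, le_rfl⟩
        set C := (Finset.Icc (-(dmax : ℤ)) 0).sup' ⟨0, hicc⟩ (fun j => ‖φ j‖) with hCdef
        have hsupC : ∀ j ∈ Finset.Icc (-(dmax : ℤ)) 0, ‖φ j‖ ≤ C := by
          intro j hj
          rw [hCdef]
          exact Finset.le_sup' (fun j => ‖φ j‖) hj
        have hC0 : 0 ≤ C := le_trans (norm_nonneg (φ 0)) (hsupC 0 hicc)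
        set c := (C + 1) / m with hcdef
        have hc : 0 ≤ c := by positivity
        have hinit : ∀ j : ℤ, -(dmax : ℤ) ≤ j → j ≤ 0 → ∀ i, φ j i ≤ c * v i := by
          intro j hj1 hj2 i
          have h1 : φ j i ≤ ‖φ j‖ := comp_le_norm _ i
          have h2 : ‖φ j‖ ≤ C := hsupC j (Finset.mem_Icc.2 ⟨hj1, hj2⟩)
          have h3 : C + 1 ≤ c * v i := by
            calc C + 1 = c * m := by rw [hcdef]; field_simp
              _ ≤ c * v i := mul_le_mul_of_nonneg_left (hmle i) hc
          linarith
        have hbound := sol_nonneg_bound A B hA hB d dmax hd.2 v hMvle φ x hφ hsol c hc hinit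
        have claim : ∀ Mm : ℕ, ∃ T : ℕ, ∀ k : ℤ, (T : ℤ) ≤ k →
            ∀ i, 0 ≤ x k i ∧ x k i ≤ μ ^ Mm * c * v i := by
          intro Mm
          induction Mm with
          | zero => exact ⟨0, fun k hk i => by simpa using hbound k (by omega) i⟩
          | succ Mm ih =>
              obtain ⟨T, hT⟩ := ih
              obtain ⟨S, hS⟩ := eventually_atTop.1 (hd.1.eventually_ge_atTop (T : ℤ))
              refine ⟨max S T + 1, fun k hk i => ?_⟩
              have hk1 : (1 : ℤ) ≤ k := by push_cast at hk; omega
              obtain ⟨k', hk''⟩ : ∃ k' : ℕ, (k' : ℤ) = k - 1 :=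
                ⟨(k - 1).toNat, Int.toNat_of_nonneg (by omega)⟩
              have hxk : x k = A.mulVec (x (k' : ℤ)) + B.mulVec (x ((k' : ℤ) - (d k' : ℤ))) := by
                have h := hsol.2 k'
                rw [show ((k' : ℤ) + 1) = k by omega] at h
                exact h
              have hSk' : S ≤ k' := by push_cast at hk; omega
              have hTk' : (T : ℤ) ≤ (k' : ℤ) := by push_cast at hk; omega
              have h1 := hT (k' : ℤ) hTk'
              have h2 := hT ((k' : ℤ) - (d k' : ℤ)) (hS k' hSk')
              rw [hxk]
              simp only [Pi.add_apply]
              refine ⟨add_nonneg (mulVec_nn A hA _ (fun j => (h1 j).1) i)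
                (mulVec_nn B hB _ (fun j => (h2 j).1) i), ?_⟩
              have hpc : (0 : ℝ) ≤ μ ^ Mm * c := mul_nonneg (pow_nonneg hμ0 _) hc
              calc A.mulVec (x (k' : ℤ)) i + B.mulVec (x ((k' : ℤ) - (d k' : ℤ))) i
                  ≤ μ ^ Mm * c * (A + B).mulVec v i :=
                    step_bound A B hA hB v _ _ _ (fun j => (h1 j).2) (fun j => (h2 j).2) i
                _ ≤ μ ^ Mm * c * (μ * v i) := mul_le_mul_of_nonneg_left (hMμ i) hpc
                _ = μ ^ (Mm + 1) * c * v i := by rw [pow_succ]; ring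
        rw [NormedAddCommGroup.tendsto_nhds_zero]
        intro ε hε
        have hcV : 0 ≤ c * V := mul_nonneg hc hV.le
        have hpos : (0 : ℝ) < ε / (c * V + 1) := div_pos hε (by linarith)
        obtain ⟨Mm, hMm⟩ :=
          ((tendsto_pow_atTop_nhds_zero_of_lt_one hμ0 hμlt).eventually_lt_const hpos).exists
        obtain ⟨T, hT⟩ := claim Mm
        filter_upwards [eventually_ge_atTop T] with k hk
        refine (pi_norm_lt_iff hε).2 fun i => ?_
        have h := hT (k : ℤ) (by exact_mod_cast hk) i
        rw [Real.norm_eq_abs, abs_of_nonneg h.1]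
        have hp := pow_nonneg hμ0 Mm
        have h4 : μ ^ Mm * c * v i ≤ μ ^ Mm * (c * V) := by
          rw [mul_assoc]
          exact mul_le_mul_of_nonneg_left (mul_le_mul_of_nonneg_left (hleV i) hc) hp
        have h6 : μ ^ Mm * (c * V + 1) < ε := (lt_div_iff₀ (by linarith)).1 hMm
        nlinarith [h.2]
  · intro hGAS
    rcases Nat.eq_zero_or_pos n with hn | hn
    · subst hn
      exact ⟨fun _ => 1, fun i => i.elim0, fun i => i.elim0⟩
    · set M := A + B with hMdef
      have hMnn : ∀ i j, 0 ≤ M i j := fun i j => add_nonneg (hA i j) (hB i j)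
      have hdc : DelayC (fun _ => 0) 0 :=
        ⟨by simpa using tendsto_natCast_atTop_atTop (R := ℤ), fun k => by simp⟩
      have hg := hGAS (fun _ => 0) 0 hdc
      have hsol : IsSolutionD n (fun y => A.mulVec y) (fun y => B.mulVec y) (fun _ => 0) 0
          (fun _ _ => (1 : ℝ)) (fun k => (M ^ k.toNat).mulVec fun _ => (1 : ℝ)) := by
        constructor
        · intro k hk1 hk2
          have hk0 : k = 0 := by omega
          subst hk0
          simp [Matrix.one_mulVec]
        · intro k
          show (M ^ ((k : ℤ) + 1).toNat).mulVec (fun _ => (1 : ℝ)) =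
            A.mulVec ((M ^ ((k : ℤ)).toNat).mulVec fun _ => (1 : ℝ)) +
              B.mulVec ((M ^ (((k : ℤ) - ((0 : ℕ) : ℤ)).toNat)).mulVec fun _ => (1 : ℝ))
          have e1 : ((k : ℤ) + 1).toNat = k + 1 := by omega
          have e2 : (((k : ℤ) - ((0 : ℕ) : ℤ)).toNat) = k := by omega
          rw [e1, e2, Int.toNat_natCast, pow_succ', ← Matrix.mulVec_mulVec, hMdef,
            Matrix.add_mulVec]
      have hφnn : NonnegInitD n 0 (fun _ _ => (1 : ℝ)) := fun k _ _ i => zero_le_one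
      have htend := hg.2 _ _ hφnn hsol
      have htend' : Tendsto (fun k : ℕ => (M ^ k).mulVec fun _ => (1 : ℝ)) atTop (nhds 0) := by
        simpa [Int.toNat_natCast] using htend
      obtain ⟨N, hN⟩ := eventually_atTop.1 (NormedAddCommGroup.tendsto_nhds_zero.1 htend' 1 one_pos)
      have hNi : ∀ i, (M ^ N).mulVec (fun _ => (1 : ℝ)) i < 1 := by
        intro i
        have h1 : ‖(M ^ N).mulVec (fun _ => (1 : ℝ)) i‖ ≤ ‖(M ^ N).mulVec fun _ => (1 : ℝ)‖ :=
          norm_le_pi_norm _ i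
        rw [Real.norm_eq_abs] at h1
        exact lt_of_le_of_lt (le_trans (le_abs_self _) h1) (hN N le_rfl)
      have hpow := pow_nn M hMnn
      have i0 : Fin n := ⟨0, hn⟩
      have hN1 : 0 < N := by
        rcases Nat.eq_zero_or_pos N with h | h
        · exfalso
          have hcontra := hNi i0
          rw [h] at hcontra
          simp [Matrix.one_mulVec] at hcontra
        · exact h
      refine ⟨∑ j ∈ Finset.range N, (M ^ j).mulVec fun _ => (1 : ℝ), ?_, ?_⟩
      · intro i
        have hterm : ∀ j ∈ Finset.range N, 0 ≤ (M ^ j).mulVec (fun _ => (1 : ℝ)) i :=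
          fun j _ => mulVec_nn _ (hpow j) _ (fun _ => zero_le_one) i
        have h0 : (M ^ 0).mulVec (fun _ => (1 : ℝ)) i = 1 := by simp [Matrix.one_mulVec]
        rw [Finset.sum_apply]
        calc (0 : ℝ) < 1 := one_pos
          _ = (M ^ 0).mulVec (fun _ => (1 : ℝ)) i := h0.symm
          _ ≤ ∑ j ∈ Finset.range N, (M ^ j).mulVec (fun _ => (1 : ℝ)) i :=
            Finset.single_le_sum hterm (Finset.mem_range.2 hN1)
      · intro i
        have hlin : M.mulVec (∑ j ∈ Finset.range N, (M ^ j).mulVec fun _ => (1 : ℝ))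
            = ∑ j ∈ Finset.range N, (M ^ (j + 1)).mulVec fun _ => (1 : ℝ) := by
          have e : M.mulVec (∑ j ∈ Finset.range N, (M ^ j).mulVec fun _ => (1 : ℝ))
              = M.mulVecLin (∑ j ∈ Finset.range N, (M ^ j).mulVec fun _ => (1 : ℝ)) := rfl
          rw [e, map_sum]
          refine Finset.sum_congr rfl fun j _ => ?_
          show M.mulVec ((M ^ j).mulVec fun _ => (1 : ℝ)) = _
          rw [Matrix.mulVec_mulVec, ← pow_succ']
        rw [hlin, Finset.sum_apply, Finset.sum_apply]
        have a := Finset.sum_range_succ' (fun j => (M ^ j).mulVec (fun _ => (1 : ℝ)) i) N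
        have b := Finset.sum_range_succ (fun j => (M ^ j).mulVec (fun _ => (1 : ℝ)) i) N
        have h0 : (M ^ 0).mulVec (fun _ => (1 : ℝ)) i = 1 := by simp [Matrix.one_mulVec]
        have hfN := hNi i
        rw [h0] at a
        linarith
end
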